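/- arXiv:0802.3190 — 3 statements merged into one kernel-verified Lean document; each statement's English description precedes it below -/
import Mathlib

section
/- In particular, λ(U_i^α(x)) → 0 uniformly in x ∈ D_I^δ as α → 0: for every ε > 0 there exists α₀ > 0 such that for all 0 < α < α₀ and all x ∈ D_I^δ, the Lebesgue measure of the set of points changing Voronoi cell under a perturbation of x_i by less than α (staying in D_I^δ) is less than ε. -/
open MeasureTheory Finset

noncomputable section

abbrev Eu (d : ℕ) := EuclideanSpace ℝ (Fin d)

def cube (d : ℕ) : Set (Eu d) := {ω | ∀ i, ω i ∈ Set.Icc (0:ℝ) 1}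

def vIndex {d : ℕ} {ι : Type*} [Fintype ι] [LinearOrder ι] [Nonempty ι]
    (x : ι → Eu d) (ω : Eu d) : ι :=
  (Finset.univ.filter fun i => ∀ j, dist (x i) ω ≤ dist (x j) ω).min' (by
    obtain ⟨i, -, hi⟩ := Finset.exists_min_image Finset.univ
      (fun j => dist (x j) ω) ⟨Classical.arbitrary ι, Finset.mem_univ _⟩
    exact ⟨i, Finset.mem_filter.2 ⟨Finset.mem_univ _,
      fun j => hi j (Finset.mem_univ _)⟩⟩)

def vCell {d : ℕ} {ι : Type*} [Fintype ι] [LinearOrder ι] [Nonempty ι]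
    (x : ι → Eu d) (i : ι) : Set (Eu d) :=
  {ω ∈ cube d | vIndex x ω = i}

def sep {d : ℕ} {ι : Type*} (δ : ℝ) : Set (ι → Eu d) :=
  {x | (∀ i, x i ∈ cube d) ∧ ∀ i j, i ≠ j → δ ≤ dist (x i) (x j)}

def gfun {d : ℕ} {ι : Type*} [Fintype ι] [LinearOrder ι] [Nonempty ι]
    (Λ : ι → ι → ℝ) (x : ι → Eu d) (ω : Eu d) : ℝ :=
  ∑ j, Λ (vIndex x ω) j * ‖x j - ω‖ ^ 2

def extVar {d : ℕ} {ι : Type*} [Fintype ι] [LinearOrder ι] [Nonempty ι]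
    (Λ : ι → ι → ℝ) (P : Measure (Eu d)) (x : ι → Eu d) : ℝ :=
  (1/2) * ∑ i, ∑ j, Λ i j * ∫ ω in vCell x i, ‖x j - ω‖ ^ 2 ∂P

def Uset {d : ℕ} {ι : Type*} [Fintype ι] [LinearOrder ι] [Nonempty ι]
    (δ α : ℝ) (x : ι → Eu d) (i : ι) : Set (Eu d) :=
  {ω | ∃ y ∈ (sep δ : Set (ι → Eu d)),
        (∀ j, j ≠ i → y j = x j) ∧ dist (x i) (y i) < α ∧
        ω ∈ vCell x i \ vCell y i}

lemma norm_le_of_cube {d : ℕ} {ω : Eu d} (h : ω ∈ cube d) : ‖ω‖ ≤ Real.sqrt d := by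
  rw [EuclideanSpace.norm_eq]
  apply Real.sqrt_le_sqrt
  calc ∑ k, ‖ω k‖ ^ 2 ≤ ∑ _k : Fin d, (1:ℝ) := by
        apply Finset.sum_le_sum
        intro k _
        have := h k
        have : |ω k| ≤ 1 := abs_le.2 ⟨by linarith [this.1], this.2⟩
        have hn : ‖ω k‖ = |ω k| := rfl
        rw [hn]
        nlinarith [abs_nonneg (ω k)]
    _ = d := by simp

lemma dist_le_of_cube {d : ℕ} {p q : Eu d} (hp : p ∈ cube d) (hq : q ∈ cube d) :
    dist p q ≤ Real.sqrt d := by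
  rw [EuclideanSpace.dist_eq]
  apply Real.sqrt_le_sqrt
  calc ∑ k, dist (p k) (q k) ^ 2 ≤ ∑ _k : Fin d, (1:ℝ) := by
        apply Finset.sum_le_sum
        intro k _
        have h1 := hp k; have h2 := hq k
        have : dist (p k) (q k) ≤ 1 := by
          rw [Real.dist_eq]
          apply abs_le.2
          constructor <;> [linarith [h1.1, h2.2]; linarith [h1.2, h2.1]]
        nlinarith [dist_nonneg (x := p k) (y := q k)]
    _ = d := by simp

lemma slab_vol {d : ℕ} {u : Eu d} (hu : ‖u‖ = 1) (a w : ℝ) (hw : 0 ≤ w) :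
    volume {ω | ω ∈ cube d ∧ (inner ℝ u ω : ℝ) ∈ Set.Icc a (a + w)}
      ≤ ENNReal.ofReal (w * (2 * Real.sqrt d) ^ (d - 1)) := by
  have hd : 0 < d := by
    rcases Nat.eq_zero_or_pos d with h | h
    · subst h
      have : u = 0 := Subsingleton.elim u 0
      rw [this, norm_zero] at hu; norm_num at hu
    · exact h
  set k₀ : Fin d := ⟨0, hd⟩
  have hcard : Module.finrank ℝ (Eu d) = Fintype.card (Fin d) := by
    simp [finrank_euclideanSpace]
  have horth : Orthonormal ℝ (({k₀} : Set (Fin d)).restrict (fun _ : Fin d => u)) := by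
    constructor
    · intro i; exact hu
    · intro i j hij
      exact absurd (Subsingleton.elim i j) hij
  obtain ⟨b, hb⟩ := horth.exists_orthonormalBasis_extension_of_card_eq hcard
  have hbk : b k₀ = u := hb k₀ rfl
  set f := b.repr with hf
  set s := Real.sqrt d with hs
  have hs0 : 0 ≤ s := Real.sqrt_nonneg _
  set lo : Fin d → ℝ := fun k => if k = k₀ then a else -s with hlo
  set hi : Fin d → ℝ := fun k => if k = k₀ then a + w else s with hhi
  set box : Set (Eu d) := {z | ∀ k, z k ∈ Set.Icc (lo k) (hi k)} with hbox
  have hsub : {ω | ω ∈ cube d ∧ (inner ℝ u ω : ℝ) ∈ Set.Icc a (a + w)} ⊆ f ⁻¹' box := by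
    rintro ω ⟨hωc, hωi⟩
    intro k
    by_cases hk : k = k₀
    · subst hk
      have : f ω k₀ = (inner ℝ u ω : ℝ) := by
        rw [hf, b.repr_apply_apply, hbk]
      simp only [hlo, hhi, if_pos rfl]
      rw [this]; exact hωi
    · have h1 : |f ω k| ≤ ‖f ω‖ := by
        rw [EuclideanSpace.norm_eq]
        have : |f ω k| = Real.sqrt (|f ω k| ^ 2) := by
          rw [Real.sqrt_sq_eq_abs, abs_abs]
        rw [this]
        apply Real.sqrt_le_sqrt
        apply Finset.single_le_sum (f := fun j => ‖f ω j‖ ^ 2) (fun j _ => by positivity)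
          (Finset.mem_univ k) |>.trans_eq' ?_
        simp [sq_abs]
      have h2 : ‖f ω‖ = ‖ω‖ := f.norm_map ω
      have h3 : ‖ω‖ ≤ s := norm_le_of_cube hωc
      simp only [hlo, hhi, if_neg hk]
      have : |f ω k| ≤ s := h1.trans (h2.le.trans h3)
      exact abs_le.1 this
  have hboxm : MeasurableSet box := by
    have : box = (MeasurableEquiv.toLp 2 (Fin d → ℝ)).symm ⁻¹'
        (Set.pi Set.univ fun k => Set.Icc (lo k) (hi k)) := by
      ext z
      simp only [hbox, Set.mem_setOf_eq, Set.mem_preimage, Set.mem_pi, Set.mem_univ,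
        true_implies]
      rfl
    rw [this]
    exact (MeasurableSet.univ_pi fun k => measurableSet_Icc).preimage
      (MeasurableEquiv.toLp 2 (Fin d → ℝ)).symm.measurable
  calc volume {ω | ω ∈ cube d ∧ (inner ℝ u ω : ℝ) ∈ Set.Icc a (a + w)}
      ≤ volume (f ⁻¹' box) := measure_mono hsub
    _ = volume box := f.measurePreserving.measure_preimage hboxm.nullMeasurableSet
    _ = volume ((MeasurableEquiv.toLp 2 (Fin d → ℝ)).symm ⁻¹'
        (Set.pi Set.univ fun k => Set.Icc (lo k) (hi k))) := by
      congr 1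
      ext z
      simp only [hbox, Set.mem_setOf_eq, Set.mem_preimage, Set.mem_pi, Set.mem_univ,
        true_implies]
      rfl
    _ = volume (Set.pi Set.univ fun k => Set.Icc (lo k) (hi k)) :=
      (EuclideanSpace.volume_preserving_symm_measurableEquiv_toLp (Fin d)).measure_preimage
        (MeasurableSet.univ_pi fun k => measurableSet_Icc).nullMeasurableSet
    _ = ∏ k, volume (Set.Icc (lo k) (hi k)) := volume_pi_pi _
    _ = ∏ k, ENNReal.ofReal (hi k - lo k) := by
      simp [Real.volume_Icc]
    _ = ENNReal.ofReal (w * (2 * s) ^ (d - 1)) := by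
      rw [← Finset.mul_prod_erase Finset.univ _ (Finset.mem_univ k₀)]
      have h1 : hi k₀ - lo k₀ = w := by simp [hlo, hhi]
      have h2 : ∀ k ∈ Finset.univ.erase k₀, ENNReal.ofReal (hi k - lo k)
          = ENNReal.ofReal (2 * s) := by
        intro k hk
        have := Finset.ne_of_mem_erase hk
        simp only [hlo, hhi, if_neg this]
        ring_nf
      rw [Finset.prod_congr rfl h2, Finset.prod_const, h1, Finset.card_erase_of_mem
        (Finset.mem_univ _), Finset.card_univ, Fintype.card_fin]
      rw [ENNReal.ofReal_mul hw, ← ENNReal.ofReal_pow (by positivity)]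

lemma vIndex_mem {d : ℕ} {ι : Type*} [Fintype ι] [LinearOrder ι] [Nonempty ι]
    (x : ι → Eu d) (ω : Eu d) : ∀ j, dist (x (vIndex x ω)) ω ≤ dist (x j) ω := by
  have h := Finset.min'_mem
    (Finset.univ.filter fun i => ∀ j, dist (x i) ω ≤ dist (x j) ω)
    (by
      obtain ⟨i, -, hi⟩ := Finset.exists_min_image Finset.univ
        (fun j => dist (x j) ω) ⟨Classical.arbitrary ι, Finset.mem_univ _⟩
      exact ⟨i, Finset.mem_filter.2 ⟨Finset.mem_univ _,
        fun j => hi j (Finset.mem_univ _)⟩⟩)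
  exact (Finset.mem_filter.1 h).2

lemma uset_sub {d : ℕ} {ι : Type*} [Fintype ι] [LinearOrder ι] [Nonempty ι]
    {δ α : ℝ} {x : ι → Eu d} {i : ι} {ω : Eu d} (hω : ω ∈ Uset δ α x i) :
    ω ∈ cube d ∧ ∃ j, j ≠ i ∧ dist (x i) ω ≤ dist (x j) ω ∧
      dist (x j) ω ≤ dist (x i) ω + α := by
  obtain ⟨y, -, hyj, hyi, hcell, hncell⟩ := hω
  obtain ⟨hωc, hvx⟩ := hcell
  refine ⟨hωc, ?_⟩
  have hxmin : ∀ j, dist (x i) ω ≤ dist (x j) ω := by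
    have := vIndex_mem x ω
    rwa [hvx] at this
  set k := vIndex y ω with hk
  have hki : k ≠ i := by
    intro h
    exact hncell ⟨hωc, h ▸ hk.symm⟩
  have hymin := vIndex_mem y ω
  refine ⟨k, hki, hxmin k, ?_⟩
  have h1 : dist (y k) ω ≤ dist (y i) ω := hymin i
  rw [hyj k hki] at h1
  have h2 : dist (y i) ω ≤ dist (y i) (x i) + dist (x i) ω := dist_triangle _ _ _
  have h3 : dist (y i) (x i) < α := by rwa [dist_comm] at hyi
  linarith

set_option maxHeartbeats 1000000 in
theorem stmt5 {d : ℕ} {ι : Type*} [Fintype ι] [LinearOrder ι] [Nonempty ι]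
    (δ : ℝ) (hδ : 0 < δ) (i : ι) :
    ∀ ε > (0:ℝ), ∃ α₀ > (0:ℝ), ∀ α, 0 < α → α < α₀ →
      ∀ x ∈ (sep δ : Set (ι → Eu d)),
        volume (Uset δ α x i) < ENNReal.ofReal ε := by
  intro ε hε
  set s := Real.sqrt d with hs
  have hs0 : 0 ≤ s := Real.sqrt_nonneg _
  set N := Fintype.card ι with hN
  set C : ℝ := (N : ℝ) * (s / δ) * (2 * s) ^ (d - 1) with hC
  have hC0 : 0 ≤ C := by positivity
  set K : ℝ := C + 1 with hK
  have hK0 : 0 < K := by linarith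
  refine ⟨ε / K, by positivity, ?_⟩
  intro α hα hαK x hx
  have hw0 : 0 ≤ s * α / δ := by positivity
  -- the slab sets
  set u : ι → Eu d := fun j => ‖x i - x j‖⁻¹ • (x i - x j) with hu
  set A : ι → ℝ := fun j => (‖x i‖ ^ 2 - ‖x j‖ ^ 2) / (2 * ‖x i - x j‖) with hA
  set S : ι → Set (Eu d) := fun j =>
    {ω | ω ∈ cube d ∧ (inner ℝ (u j) ω : ℝ) ∈ Set.Icc (A j) (A j + s * α / δ)} with hS
  have hnj : ∀ j, j ≠ i → δ ≤ ‖x i - x j‖ := by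
    intro j hji
    have := hx.2 i j (Ne.symm hji)
    rwa [dist_eq_norm] at this
  have hsub : Uset δ α x i ⊆ ⋃ j ∈ Finset.univ.erase i, S j := by
    intro ω hω
    obtain ⟨hωc, j, hji, hd1, hd2⟩ := uset_sub hω
    have hn : δ ≤ ‖x i - x j‖ := hnj j hji
    have hn0 : 0 < ‖x i - x j‖ := lt_of_lt_of_le hδ hn
    refine Set.mem_biUnion (Finset.mem_erase.2 ⟨hji, Finset.mem_univ j⟩) ?_
    refine ⟨hωc, ?_⟩
    -- distances
    set di := dist (x i) ω with hdi
    set dj := dist (x j) ω with hdj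
    have hdi0 : 0 ≤ di := dist_nonneg
    have hdis : di ≤ s := dist_le_of_cube (hx.1 i) hωc
    have hdjs : dj ≤ s := dist_le_of_cube (hx.1 j) hωc
    have hDlow : 0 ≤ dj ^ 2 - di ^ 2 := by nlinarith
    have hDhigh : dj ^ 2 - di ^ 2 ≤ 2 * s * α := by nlinarith
    have hdin : di = ‖x i - ω‖ := by rw [hdi, dist_eq_norm]
    have hdjn : dj = ‖x j - ω‖ := by rw [hdj, dist_eq_norm]
    have hDval : dj ^ 2 - di ^ 2 =
        ‖x j‖ ^ 2 - ‖x i‖ ^ 2 + 2 * (inner ℝ (x i - x j) ω : ℝ) := by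
      rw [hdin, hdjn, norm_sub_sq_real (x := x j), norm_sub_sq_real (x := x i),
        inner_sub_left]
      ring
    have hiu : (inner ℝ (u j) ω : ℝ) =
        A j + (dj ^ 2 - di ^ 2) / (2 * ‖x i - x j‖) := by
      have hn' : ‖x i - x j‖ ≠ 0 := ne_of_gt hn0
      rw [hu]
      simp only [real_inner_smul_left]
      rw [hA, show (inner ℝ (x i - x j) ω : ℝ)
          = ((dj ^ 2 - di ^ 2) - ‖x j‖ ^ 2 + ‖x i‖ ^ 2) / 2 by linarith [hDval]]
      field_simp
      ring
    constructor
    · rw [hiu]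
      have : 0 ≤ (dj ^ 2 - di ^ 2) / (2 * ‖x i - x j‖) := by positivity
      linarith
    · rw [hiu]
      have h1 : (dj ^ 2 - di ^ 2) / (2 * ‖x i - x j‖) ≤ (2 * s * α) / (2 * δ) := by
        apply div_le_div₀ (by positivity) hDhigh (by positivity) (by linarith)
      have h2 : (2 * s * α) / (2 * δ) = s * α / δ := by ring
      linarith
  have hvol : ∀ j ∈ Finset.univ.erase i,
      volume (S j) ≤ ENNReal.ofReal ((s * α / δ) * (2 * s) ^ (d - 1)) := by
    intro j hj
    have hji : j ≠ i := Finset.ne_of_mem_erase hj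
    have hn : δ ≤ ‖x i - x j‖ := hnj j hji
    have hn0 : 0 < ‖x i - x j‖ := lt_of_lt_of_le hδ hn
    have hu1 : ‖u j‖ = 1 := by
      rw [hu]
      simp only [norm_smul, norm_inv, norm_norm]
      field_simp
    exact slab_vol hu1 (A j) (s * α / δ) hw0
  calc volume (Uset δ α x i) ≤ volume (⋃ j ∈ Finset.univ.erase i, S j) :=
        measure_mono hsub
    _ ≤ ∑ j ∈ Finset.univ.erase i, volume (S j) := measure_biUnion_finset_le _ _
    _ ≤ ∑ _j ∈ Finset.univ.erase i,
        ENNReal.ofReal ((s * α / δ) * (2 * s) ^ (d - 1)) := Finset.sum_le_sum hvol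
    _ = (Finset.univ.erase i).card •
        ENNReal.ofReal ((s * α / δ) * (2 * s) ^ (d - 1)) := Finset.sum_const _
    _ ≤ N * ENNReal.ofReal ((s * α / δ) * (2 * s) ^ (d - 1)) := by
        rw [nsmul_eq_mul]
        gcongr
        exact_mod_cast Finset.card_le_card (Finset.erase_subset _ _) |>.trans
          (le_of_eq (by simp [hN]))
    _ = ENNReal.ofReal (α * C) := by
        rw [← ENNReal.ofReal_natCast N, ← ENNReal.ofReal_mul (by positivity)]
        congr 1
        rw [hC]
        ring
    _ < ENNReal.ofReal ε := by
        apply (ENNReal.ofReal_lt_ofReal_iff hε).2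
        have h1 : α * K < ε := by
          rw [lt_div_iff₀ hK0] at hαK
          exact hαK
        nlinarith
end
end

section
/- For every x⁰ ∈ D_I^δ and ε > 0, there exists α > 0 such that, letting W(x⁰) be the set of ω ∈ [0,1]^d whose Voronoi index is the same for x⁰ and for every x ∈ D_I^δ with max_i ‖x_i - x⁰_i‖ < α, one has ∫_{W(x⁰)} ( g_{x⁰}(ω) - inf_{x: max_i‖x_i - x⁰_i‖<α} g_x(ω) ) dP(ω) < ε/2, where P is any probability measure on [0,1]^d with density bounded by B with respect to Lebesgue measure. -/
open MeasureTheory Finset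

noncomputable section

/-! ### Auxiliary lemmas -/

lemma vIndex_eq_of_lt {d : ℕ} {ι : Type*} [Fintype ι] [LinearOrder ι] [Nonempty ι]
    (x : ι → Eu d) (ω : Eu d) (i : ι)
    (h : ∀ j, j ≠ i → dist (x i) ω < dist (x j) ω) : vIndex x ω = i := by
  have hfil : (Finset.univ.filter fun k => ∀ j, dist (x k) ω ≤ dist (x j) ω) = {i} := by
    ext k
    simp only [Finset.mem_filter, Finset.mem_univ, true_and, Finset.mem_singleton]
    constructor
    · intro hk
      by_contra hki
      exact absurd (hk i) (not_le.2 (h k hki))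
    · intro hki j
      rw [hki]
      rcases eq_or_ne j i with rfl | hj
      · exact le_refl _
      · exact (h j hj).le
  have hmem : vIndex x ω ∈ (Finset.univ.filter fun k => ∀ j, dist (x k) ω ≤ dist (x j) ω) :=
    Finset.min'_mem _ _
  rw [hfil] at hmem
  exact Finset.mem_singleton.1 hmem

lemma zero_mem_cube (d : ℕ) : (0 : Eu d) ∈ cube d := by
  intro i
  constructor <;> simp

lemma norm_sub_le_sqrt {d : ℕ} {a ω : Eu d} (ha : a ∈ cube d) (hω : ω ∈ cube d) :
    ‖a - ω‖ ≤ Real.sqrt d := by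
  rw [EuclideanSpace.norm_eq]
  apply Real.sqrt_le_sqrt
  have key : ∀ i, ‖(a - ω) i‖ ^ 2 ≤ 1 := by
    intro i
    have h1 := (ha i).1; have h2 := (ha i).2
    have h3 := (hω i).1; have h4 := (hω i).2
    have he : (a - ω) i = a i - ω i := rfl
    rw [he, Real.norm_eq_abs, sq_abs]
    nlinarith
  calc ∑ i, ‖(a - ω) i‖ ^ 2 ≤ ∑ _i : Fin d, (1:ℝ) := Finset.sum_le_sum fun i _ => key i
  _ = d := by simp

lemma cube_measurable (d : ℕ) : MeasurableSet (cube d) := by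
  have h : cube d = ⋂ i, (fun ω : Eu d => ω i) ⁻¹' Set.Icc (0:ℝ) 1 := by
    ext ω; simp [cube, Set.mem_iInter]
  rw [h]
  exact MeasurableSet.iInter fun i =>
    ((EuclideanSpace.proj (𝕜 := ℝ) i).continuous.measurable) measurableSet_Icc

lemma cube_vol_lt_top (d : ℕ) : volume (cube d) < ⊤ := by
  have hsub : cube d ⊆ Metric.closedBall 0 (Real.sqrt d) := by
    intro ω hω
    rw [Metric.mem_closedBall, dist_zero_right]
    simpa using norm_sub_le_sqrt hω (zero_mem_cube d)
  exact lt_of_le_of_lt (measure_mono hsub) measure_closedBall_lt_top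

lemma bisector_null {d : ℕ} {a b : Eu d} (hab : a ≠ b) :
    volume {ω : Eu d | dist a ω = dist b ω} = 0 := by
  have hset : {ω : Eu d | dist a ω = dist b ω}
      = (AffineSubspace.perpBisector a b : Set (Eu d)) := by
    ext ω
    simp only [Set.mem_setOf_eq, SetLike.mem_coe, AffineSubspace.mem_perpBisector_iff_dist_eq]
    constructor <;> intro h <;> [skip; skip] <;> rw [dist_comm a, dist_comm b] at * <;> tauto
  rw [hset]
  exact Measure.addHaar_affineSubspace volume _
    (by rw [Ne, AffineSubspace.perpBisector_eq_top]; exact hab)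

lemma exists_good_k {d : ℕ} {ι : Type*} [Fintype ι] [LinearOrder ι] [Nonempty ι]
    (x0 : ι → Eu d) (hx0inj : ∀ i j : ι, i ≠ j → x0 i ≠ x0 j) (η : ℝ) (hη : 0 < η) :
    ∃ k₀ : ℕ, ∑ p ∈ Finset.univ.offDiag,
      volume {ω : Eu d | ω ∈ cube d ∧
        |dist (x0 p.1) ω - dist (x0 p.2) ω| ≤ 2 / ((k₀:ℝ)+1)} < ENNReal.ofReal η := by
  set A : ι × ι → ℕ → Set (Eu d) := fun p k =>
    {ω : Eu d | ω ∈ cube d ∧ |dist (x0 p.1) ω - dist (x0 p.2) ω| ≤ 2 / ((k:ℝ)+1)} with hA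
  have hmeas : ∀ p k, MeasurableSet (A p k) := by
    intro p k
    apply (cube_measurable d).inter
    have hcont : Continuous fun ω : Eu d => |dist (x0 p.1) ω - dist (x0 p.2) ω| :=
      ((continuous_const.dist continuous_id).sub (continuous_const.dist continuous_id)).abs
    exact hcont.measurable measurableSet_Iic
  have htend : ∀ p : ι × ι, p.1 ≠ p.2 →
      Filter.Tendsto (fun k => volume (A p k)) Filter.atTop (nhds 0) := by
    intro p hp
    have hanti : Antitone (A p) := by
      intro k m hkm ω hω
      refine ⟨hω.1, hω.2.trans ?_⟩
      have hc : ((k:ℝ)+1) ≤ (m:ℝ)+1 := by exact_mod_cast Nat.succ_le_succ hkm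
      gcongr
    have hsub : (⋂ k, A p k) ⊆ {ω : Eu d | dist (x0 p.1) ω = dist (x0 p.2) ω} := by
      intro ω hω
      simp only [Set.mem_iInter] at hω
      have habs : |dist (x0 p.1) ω - dist (x0 p.2) ω| ≤ 0 := by
        by_contra hlt
        push_neg at hlt
        obtain ⟨k, hk⟩ := exists_nat_gt (2 / |dist (x0 p.1) ω - dist (x0 p.2) ω|)
        have h2 : 2 / ((k:ℝ)+1) < |dist (x0 p.1) ω - dist (x0 p.2) ω| := by
          rw [div_lt_iff₀ (by positivity)]
          rw [div_lt_iff₀ hlt] at hk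
          nlinarith [hlt]
        exact absurd (hω k).2 (not_le.2 h2)
      have h0 := abs_nonneg (dist (x0 p.1) ω - dist (x0 p.2) ω)
      have heq : |dist (x0 p.1) ω - dist (x0 p.2) ω| = 0 := le_antisymm habs h0
      exact sub_eq_zero.1 (abs_eq_zero.1 heq)
    have h0 : volume (⋂ k, A p k) = 0 :=
      measure_mono_null hsub (bisector_null (hx0inj _ _ hp))
    have ht := tendsto_measure_iInter_atTop (μ := volume) (s := A p)
      (fun k => (hmeas p k).nullMeasurableSet) hanti
      ⟨0, (lt_of_le_of_lt (measure_mono fun ω hω => hω.1) (cube_vol_lt_top d)).ne⟩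
    rwa [h0] at ht
  have hsum : Filter.Tendsto (fun k => ∑ p ∈ Finset.univ.offDiag,
      volume (A p k)) Filter.atTop (nhds 0) := by
    have h := tendsto_finset_sum (Finset.univ.offDiag : Finset (ι × ι))
      (fun p hp => htend p (Finset.mem_offDiag.1 hp).2.2)
    simpa using h
  exact (hsum.eventually_lt_const (ENNReal.ofReal_pos.2 hη)).exists

set_option maxHeartbeats 2000000 in
theorem stmt9 {d : ℕ} {ι : Type*} [Fintype ι] [LinearOrder ι] [Nonempty ι]
    (Λ : ι → ι → ℝ) (hΛmem : ∀ i j, Λ i j ∈ Set.Icc (0:ℝ) 1)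
    (hΛsymm : ∀ i j, Λ i j = Λ j i) (hΛ0 : ∀ i, Λ i i = 1)
    (δ B : ℝ) (hδ : 0 < δ) (hB : 0 < B)
    (P : Measure (Eu d)) [IsProbabilityMeasure P] (hPcube : P (cube d) = 1)
    (hPB : ∀ s : Set (Eu d), MeasurableSet s →
      P s ≤ ENNReal.ofReal B * volume s)
    (x0 : ι → Eu d) (hx0 : x0 ∈ (sep δ : Set (ι → Eu d)))
    (ε : ℝ) (hε : 0 < ε) :
    ∃ α > (0:ℝ),
      ∫ ω in {ω ∈ cube d | ∀ x ∈ (sep δ : Set (ι → Eu d)),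
                (∀ i, dist (x i) (x0 i) < α) → vIndex x ω = vIndex x0 ω},
        (gfun Λ x0 ω -
          ⨅ x : {x : ι → Eu d // x ∈ (sep δ : Set (ι → Eu d)) ∧
                  ∀ i, dist (x i) (x0 i) < α}, gfun Λ x.1 ω) ∂P
      < ε / 2 := by
  classical
  -- constants
  set n : ℝ := (Fintype.card ι : ℝ) with hn
  have hn1 : (1:ℝ) ≤ n := by
    rw [hn]; exact_mod_cast Fintype.card_pos
  set sd : ℝ := Real.sqrt d with hsd
  have hsd0 : 0 ≤ sd := Real.sqrt_nonneg _
  set K : ℝ := n * (2*sd+1) with hK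
  have hKpos : 0 < K := by
    rw [hK]; nlinarith
  set M : ℝ := n * d with hM
  have hM0 : 0 ≤ M := by
    rw [hM]; positivity
  set η : ℝ := ε / (8 * B * (M+1)) with hη
  have hηpos : 0 < η := by rw [hη]; exact div_pos hε (by nlinarith)
  -- injectivity of x0
  have hx0inj : ∀ i j : ι, i ≠ j → x0 i ≠ x0 j := by
    intro i j hij heq
    have := hx0.2 i j hij
    rw [heq, dist_self] at this
    linarith
  obtain ⟨k₀, hk₀⟩ := exists_good_k x0 hx0inj η hηpos
  set α : ℝ := min (((k₀:ℝ)+1)⁻¹) (min 1 (ε/(8*(K+1)))) with hαdef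
  have hαpos : 0 < α := by
    rw [hαdef]
    exact lt_min (by positivity) (lt_min one_pos (div_pos hε (by nlinarith)))
  have hα1 : α ≤ 1 := (min_le_right _ _).trans (min_le_left _ _)
  have hαk : α ≤ ((k₀:ℝ)+1)⁻¹ := min_le_left _ _
  have hαε : α ≤ ε/(8*(K+1)) := (min_le_right _ _).trans (min_le_right _ _)
  clear_value n sd K M η α
  refine ⟨α, hαpos, ?_⟩
  set W : Set (Eu d) := {ω ∈ cube d | ∀ x ∈ (sep δ : Set (ι → Eu d)),
      (∀ i, dist (x i) (x0 i) < α) → vIndex x ω = vIndex x0 ω} with hWdef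
  set f : Eu d → ℝ := fun ω => gfun Λ x0 ω -
      ⨅ x : {x : ι → Eu d // x ∈ (sep δ : Set (ι → Eu d)) ∧
              ∀ i, dist (x i) (x0 i) < α}, gfun Λ x.1 ω with hfdef
  haveI hne : Nonempty {x : ι → Eu d // x ∈ (sep δ : Set (ι → Eu d)) ∧
      ∀ i, dist (x i) (x0 i) < α} :=
    ⟨⟨x0, hx0, fun i => by simpa using hαpos⟩⟩
  have hΛ0le : ∀ i j, 0 ≤ Λ i j := fun i j => (hΛmem i j).1
  have hΛ1le : ∀ i j, Λ i j ≤ 1 := fun i j => (hΛmem i j).2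
  have hgnn : ∀ (x : ι → Eu d) (ω : Eu d), 0 ≤ gfun Λ x ω := fun x ω =>
    Finset.sum_nonneg fun j _ => mul_nonneg (hΛ0le _ _) (sq_nonneg _)
  have hbdd : ∀ ω : Eu d, BddBelow (Set.range fun x : {x : ι → Eu d //
      x ∈ (sep δ : Set (ι → Eu d)) ∧ ∀ i, dist (x i) (x0 i) < α} => gfun Λ x.1 ω) := by
    intro ω
    refine ⟨0, ?_⟩
    rintro y ⟨x, rfl⟩
    exact hgnn _ _
  have hinf0 : ∀ ω : Eu d, (0:ℝ) ≤ ⨅ x : {x : ι → Eu d //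
      x ∈ (sep δ : Set (ι → Eu d)) ∧ ∀ i, dist (x i) (x0 i) < α}, gfun Λ x.1 ω :=
    fun ω => le_ciInf fun x => hgnn _ _
  have hf0 : ∀ ω : Eu d, 0 ≤ f ω := by
    intro ω
    rw [hfdef, sub_nonneg]
    exact ciInf_le (hbdd ω) ⟨x0, hx0, fun i => by simpa using hαpos⟩
  have hfub : ∀ ω ∈ cube d, f ω ≤ M := by
    intro ω hω
    have hg : gfun Λ x0 ω ≤ M := by
      rw [gfun]
      calc ∑ j, Λ (vIndex x0 ω) j * ‖x0 j - ω‖ ^ 2 ≤ ∑ _j : ι, (d:ℝ) := by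
            refine Finset.sum_le_sum fun j _ => ?_
            have h1 : ‖x0 j - ω‖ ≤ sd := by rw [hsd]; exact norm_sub_le_sqrt (hx0.1 j) hω
            have h2 : sd ^ 2 = (d:ℝ) := by rw [hsd]; exact Real.sq_sqrt (by positivity)
            have h3 : ‖x0 j - ω‖ ^ 2 ≤ (d:ℝ) := by nlinarith [norm_nonneg (x0 j - ω)]
            calc Λ (vIndex x0 ω) j * ‖x0 j - ω‖ ^ 2
                ≤ 1 * ‖x0 j - ω‖ ^ 2 :=
                  mul_le_mul_of_nonneg_right (hΛ1le _ _) (sq_nonneg _)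
              _ ≤ (d:ℝ) := by linarith
        _ = M := by
            rw [Finset.sum_const, nsmul_eq_mul, Finset.card_univ, hM, hn]
    have := hinf0 ω
    rw [hfdef]
    simp only []
    linarith
  -- bound on W
  have hfW : ∀ ω ∈ W, f ω ≤ K * α := by
    intro ω hω
    obtain ⟨hωc, hωW⟩ := hω
    have key : ∀ xh : {x : ι → Eu d // x ∈ (sep δ : Set (ι → Eu d)) ∧
        ∀ i, dist (x i) (x0 i) < α}, gfun Λ x0 ω - K * α ≤ gfun Λ xh.1 ω := by
      rintro ⟨x, hxs, hxd⟩
      have hidx : vIndex x ω = vIndex x0 ω := hωW x hxs hxd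
      have hterm : ∀ j : ι, Λ (vIndex x0 ω) j * ‖x0 j - ω‖ ^ 2
          - Λ (vIndex x0 ω) j * ‖x j - ω‖ ^ 2 ≤ (2*sd+1)*α := by
        intro j
        have ha : ‖x0 j - ω‖ ≤ sd := by rw [hsd]; exact norm_sub_le_sqrt (hx0.1 j) hωc
        have hab : |‖x0 j - ω‖ - ‖x j - ω‖| ≤ α := by
          have he : (x0 j - ω) - (x j - ω) = x0 j - x j := by abel
          calc |‖x0 j - ω‖ - ‖x j - ω‖| ≤ ‖(x0 j - ω) - (x j - ω)‖ :=
                abs_norm_sub_norm_le _ _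
            _ = dist (x0 j) (x j) := by rw [he, dist_eq_norm]
            _ ≤ α := by rw [dist_comm]; exact (hxd j).le
        have habs := abs_le.1 hab
        have ha0 : (0:ℝ) ≤ ‖x0 j - ω‖ := norm_nonneg _
        have hb0 : (0:ℝ) ≤ ‖x j - ω‖ := norm_nonneg _
        have hb1 : ‖x j - ω‖ ≤ sd + 1 := by linarith [habs.2]
        have h2 : ‖x0 j - ω‖ ^ 2 - ‖x j - ω‖ ^ 2 ≤ (2*sd+1)*α := by
          nlinarith [habs.1, habs.2]
        have hΛa := hΛ0le (vIndex x0 ω) j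
        have hΛb := hΛ1le (vIndex x0 ω) j
        rcases le_or_gt (‖x0 j - ω‖ ^ 2 - ‖x j - ω‖ ^ 2) 0 with hneg | hpos
        · have hr : (0:ℝ) ≤ (2*sd+1)*α := mul_nonneg (by linarith) hαpos.le
          nlinarith [mul_nonneg hΛa (neg_nonneg.2 hneg)]
        · have := mul_le_mul_of_nonneg_right hΛb hpos.le
          nlinarith
      have hsum : gfun Λ x0 ω - gfun Λ x ω ≤ K * α := by
        rw [gfun, gfun, hidx, ← Finset.sum_sub_distrib]
        calc ∑ j, (Λ (vIndex x0 ω) j * ‖x0 j - ω‖ ^ 2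
              - Λ (vIndex x0 ω) j * ‖x j - ω‖ ^ 2)
            ≤ ∑ _j : ι, (2*sd+1)*α := Finset.sum_le_sum fun j _ => hterm j
          _ = K * α := by
              rw [Finset.sum_const, nsmul_eq_mul, Finset.card_univ, hK, hn]; ring
      linarith
    have hinf : gfun Λ x0 ω - K * α ≤ ⨅ x : {x : ι → Eu d //
        x ∈ (sep δ : Set (ι → Eu d)) ∧ ∀ i, dist (x i) (x0 i) < α}, gfun Λ x.1 ω :=
      le_ciInf key
    rw [hfdef]
    simp only []
    linarith
  -- the good set G
  set G : Set (Eu d) := cube d ∩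
      ⋃ i : ι, {ω : Eu d | ∀ j, j ≠ i → dist (x0 i) ω + 2*α < dist (x0 j) ω} with hGdef
  have hGmeas : MeasurableSet G := by
    apply (cube_measurable d).inter
    refine MeasurableSet.iUnion fun i => ?_
    have hrw : {ω : Eu d | ∀ j, j ≠ i → dist (x0 i) ω + 2*α < dist (x0 j) ω}
        = ⋂ j, {ω : Eu d | j ≠ i → dist (x0 i) ω + 2*α < dist (x0 j) ω} := by
      ext ω; simp [Set.mem_iInter]
    rw [hrw]
    refine MeasurableSet.iInter fun j => ?_
    by_cases hj : j = i
    · simp [hj]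
    · have hrw2 : {ω : Eu d | j ≠ i → dist (x0 i) ω + 2*α < dist (x0 j) ω}
          = {ω : Eu d | dist (x0 i) ω + 2*α < dist (x0 j) ω} := by
        ext ω; simp [hj]
      rw [hrw2]
      exact measurableSet_lt
        (((continuous_const.dist continuous_id).add continuous_const).measurable)
        ((continuous_const.dist continuous_id).measurable)
  have hGW : G ⊆ W := by
    rintro ω ⟨hωc, hωu⟩
    simp only [Set.mem_iUnion, Set.mem_setOf_eq] at hωu
    obtain ⟨i, hi⟩ := hωu
    have h0 : vIndex x0 ω = i :=
      vIndex_eq_of_lt _ _ _ fun j hj => by linarith [hi j hj]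
    refine ⟨hωc, fun x hxs hxd => ?_⟩
    rw [h0]
    refine vIndex_eq_of_lt _ _ _ fun j hj => ?_
    have e1 : dist (x i) ω ≤ dist (x i) (x0 i) + dist (x0 i) ω := dist_triangle _ _ _
    have e2 : dist (x0 j) ω ≤ dist (x0 j) (x j) + dist (x j) ω := dist_triangle _ _ _
    have e3 : dist (x0 j) (x j) < α := by rw [dist_comm]; exact hxd j
    have e4 : dist (x i) (x0 i) < α := hxd i
    have e5 := hi j hj
    linarith
  have hWc : W ⊆ cube d := fun ω hω => hω.1
  -- covering of the complement
  have hGsub : cube d \ G ⊆ ⋃ p ∈ (Finset.univ.offDiag : Finset (ι × ι)),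
      {ω : Eu d | ω ∈ cube d ∧
        |dist (x0 p.1) ω - dist (x0 p.2) ω| ≤ 2 / ((k₀:ℝ)+1)} := by
    rintro ω ⟨hωc, hωn⟩
    obtain ⟨i, -, hi⟩ := Finset.exists_min_image Finset.univ
      (fun j => dist (x0 j) ω) ⟨Classical.arbitrary ι, Finset.mem_univ _⟩
    have hnu : ω ∉ ⋃ i : ι, {ω : Eu d | ∀ j, j ≠ i →
        dist (x0 i) ω + 2*α < dist (x0 j) ω} := fun h => hωn ⟨hωc, h⟩
    simp only [Set.mem_iUnion, Set.mem_setOf_eq, not_exists, not_forall] at hnu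
    obtain ⟨j, hj, hle⟩ := hnu i
    push_neg at hle
    have hmin : dist (x0 i) ω ≤ dist (x0 j) ω := hi j (Finset.mem_univ _)
    have h2α : 2*α ≤ 2/((k₀:ℝ)+1) := by
      rw [div_eq_mul_inv]
      nlinarith [hαk]
    refine Set.mem_biUnion (show ((i, j) : ι × ι) ∈ (Finset.univ.offDiag : Finset (ι × ι))
      from Finset.mem_offDiag.2 ⟨Finset.mem_univ _, Finset.mem_univ _, Ne.symm hj⟩) ?_
    refine ⟨hωc, ?_⟩
    rw [abs_le]
    constructor
    · simp only []
      linarith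
    · simp only []
      linarith
  have hvol : volume (Gᶜ ∩ cube d) < ENNReal.ofReal η := by
    have h1 : Gᶜ ∩ cube d = cube d \ G := by rw [Set.diff_eq, Set.inter_comm]
    calc volume (Gᶜ ∩ cube d) ≤ ∑ p ∈ (Finset.univ.offDiag : Finset (ι × ι)),
        volume {ω : Eu d | ω ∈ cube d ∧
          |dist (x0 p.1) ω - dist (x0 p.2) ω| ≤ 2 / ((k₀:ℝ)+1)} := by
          rw [h1]
          exact le_trans (measure_mono hGsub) (measure_biUnion_finset_le _ _)
      _ < ENNReal.ofReal η := hk₀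
  have hPc0 : P (cube d)ᶜ = 0 := by
    have h := measure_compl (cube_measurable d) (measure_ne_top P _)
    rw [hPcube, measure_univ] at h
    simpa using h
  -- main integral estimate
  by_cases hInt : Integrable f (P.restrict W)
  swap
  · rw [integral_undef hInt]
    linarith
  have hsplit : ∫ ω, f ω ∂(P.restrict W)
      = (∫ ω in G, f ω ∂(P.restrict W)) + ∫ ω in Gᶜ, f ω ∂(P.restrict W) :=
    (integral_add_compl hGmeas hInt).symm
  have ht1 : ‖∫ ω in G, f ω ∂(P.restrict W)‖ ≤ (K*α) * (P G).toReal := by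
    have hrG : (P.restrict W).restrict G = P.restrict G := by
      rw [Measure.restrict_restrict hGmeas, Set.inter_eq_left.2 hGW]
    rw [show (∫ ω in G, f ω ∂(P.restrict W)) = ∫ ω in G, f ω ∂P from by rw [hrG]]
    refine norm_setIntegral_le_of_norm_le_const_ae' (measure_lt_top P G) ?_
    refine Filter.Eventually.of_forall fun ω hω => ?_
    rw [Real.norm_eq_abs, abs_of_nonneg (hf0 ω)]
    exact hfW ω (hGW hω)
  have ht2 : ‖∫ ω in Gᶜ, f ω ∂(P.restrict W)‖
      ≤ M * ((P.restrict W) Gᶜ).toReal := by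
    refine norm_setIntegral_le_of_norm_le_const_ae ?_ ?_
    · rw [Measure.restrict_apply hGmeas.compl]
      exact measure_lt_top P _
    · have hle : (P.restrict W).restrict Gᶜ ≤ P :=
        le_trans Measure.restrict_le_self Measure.restrict_le_self
      have hnull : ((P.restrict W).restrict Gᶜ) ((cube d)ᶜ) = 0 :=
        le_antisymm (le_trans (Measure.le_iff'.1 hle _) hPc0.le) zero_le
      rw [Filter.eventually_iff, mem_ae_iff]
      refine measure_mono_null ?_ hnull
      intro ω hω
      simp only [Set.mem_compl_iff, Set.mem_setOf_eq] at hω ⊢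
      intro hωc
      apply hω
      rw [Real.norm_eq_abs, abs_of_nonneg (hf0 ω)]
      exact hfub ω hωc
  have hPG1 : (P G).toReal ≤ 1 := by
    refine ENNReal.toReal_le_of_le_ofReal zero_le_one ?_
    rw [ENNReal.ofReal_one]
    exact prob_le_one
  have hWG : ((P.restrict W) Gᶜ).toReal ≤ B * η := by
    have h1 : (P.restrict W) Gᶜ = P (Gᶜ ∩ W) := Measure.restrict_apply hGmeas.compl
    have h2 : P (Gᶜ ∩ W) ≤ P (Gᶜ ∩ cube d) :=
      measure_mono (Set.inter_subset_inter_right _ hWc)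
    have h3 : P (Gᶜ ∩ cube d) ≤ ENNReal.ofReal B * volume (Gᶜ ∩ cube d) :=
      hPB _ (hGmeas.compl.inter (cube_measurable d))
    have h4 : ENNReal.ofReal B * volume (Gᶜ ∩ cube d)
        ≤ ENNReal.ofReal B * ENNReal.ofReal η := mul_le_mul_right hvol.le _
    rw [← ENNReal.ofReal_mul hB.le] at h4
    refine ENNReal.toReal_le_of_le_ofReal (mul_nonneg hB.le hηpos.le) ?_
    rw [h1]
    exact h2.trans (h3.trans h4)
  have hKα : K * α ≤ ε/8 := by
    have h1 : K * α ≤ K * (ε/(8*(K+1))) := mul_le_mul_of_nonneg_left hαε hKpos.le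
    have h2 : K * (ε/(8*(K+1))) ≤ ε/8 := by
      rw [← mul_div_assoc, div_le_div_iff₀ (by nlinarith) (by norm_num)]
      nlinarith [hε.le, hKpos.le]
    linarith
  have hMB : M * (B * η) ≤ ε/8 := by
    rw [hη, ← mul_div_assoc, ← mul_div_assoc, div_le_div_iff₀ (by nlinarith) (by norm_num)]
    nlinarith [mul_nonneg hB.le hε.le, mul_nonneg (mul_nonneg hM0 hB.le) hε.le]
  calc ∫ ω in W, f ω ∂P
      = (∫ ω in G, f ω ∂(P.restrict W)) + ∫ ω in Gᶜ, f ω ∂(P.restrict W) := hsplit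
    _ ≤ ‖∫ ω in G, f ω ∂(P.restrict W)‖ + ‖∫ ω in Gᶜ, f ω ∂(P.restrict W)‖ := by
        rw [Real.norm_eq_abs, Real.norm_eq_abs]
        exact add_le_add (le_abs_self _) (le_abs_self _)
    _ ≤ (K*α) * (P G).toReal + M * ((P.restrict W) Gᶜ).toReal := add_le_add ht1 ht2
    _ ≤ (K*α) * 1 + M * (B*η) := by
        refine add_le_add (mul_le_mul_of_nonneg_left hPG1
          (mul_nonneg hKpos.le hαpos.le)) ?_
        exact mul_le_mul_of_nonneg_left hWG hM0
    _ < ε / 2 := by rw [mul_one]; linarith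
end
end

section
/- (Uniform law of large numbers) Let ω_1, ω_2, … be i.i.d. with law P on [0,1]^d, where P has density bounded by B with respect to Lebesgue measure, and let P_n denote the empirical measure. Then sup_{x ∈ D_I^δ} | ∫ g_x dP_n − ∫ g_x dP | → 0 almost surely as n → ∞. -/
open MeasureTheory Finset

noncomputable section

section Lemmas
variable {d : ℕ} {ι : Type*} [Fintype ι] [LinearOrder ι] [Nonempty ι]

lemma isClosed_cube : IsClosed (cube d) := by
  have : cube d = ⋂ i, (fun ω : Eu d => ω i) ⁻¹' Set.Icc 0 1 := by
    ext ω; simp [cube]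
  rw [this]
  exact isClosed_iInter fun i => isClosed_Icc.preimage (EuclideanSpace.proj i).continuous

lemma norm_le_sqrt_of_cube {a b : Eu d} (ha : a ∈ cube d) (hb : b ∈ cube d) :
    ‖a - b‖ ≤ Real.sqrt d := by
  rw [EuclideanSpace.norm_eq]
  apply Real.sqrt_le_sqrt
  calc (∑ i, ‖(a - b) i‖^2) ≤ ∑ _i : Fin d, (1:ℝ) := by
        apply Finset.sum_le_sum
        intro i _
        have h1 := ha i; have h2 := hb i
        simp only [Set.mem_Icc] at h1 h2
        have : ‖(a-b) i‖ ≤ 1 := by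
          simp only [PiLp.sub_apply, Real.norm_eq_abs]
          rw [abs_le]; constructor <;> linarith
        nlinarith [norm_nonneg ((a-b) i)]
    _ = d := by simp

lemma sq_norm_le_of_cube {a b : Eu d} (ha : a ∈ cube d) (hb : b ∈ cube d) :
    ‖a - b‖^2 ≤ d := by
  have h := norm_le_sqrt_of_cube ha hb
  nlinarith [norm_nonneg (a - b), Real.sq_sqrt (by positivity : (0:ℝ) ≤ (d:ℝ)),
    Real.sqrt_nonneg (d:ℝ)]

lemma isCompact_cube : IsCompact (cube d) := by
  apply Metric.isCompact_of_isClosed_isBounded isClosed_cube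
  apply Bornology.IsBounded.subset (Metric.isBounded_closedBall (x := (0:Eu d)) (r := Real.sqrt d))
  intro ω hω
  have h0 : (0:Eu d) ∈ cube d := by intro i; simp
  simpa [Metric.mem_closedBall, dist_eq_norm] using norm_le_sqrt_of_cube hω h0

lemma isCompact_sepSet (δ' : ℝ) : IsCompact (sep δ' : Set (ι → Eu d)) := by
  have hsub : (sep δ' : Set (ι → Eu d)) ⊆ Set.univ.pi (fun _ => cube d) := by
    intro x hx; rw [Set.mem_univ_pi]; exact fun i => hx.1 i
  have hclosed : IsClosed (sep δ' : Set (ι → Eu d)) := by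
    have : (sep δ' : Set (ι → Eu d)) =
        (⋂ i, (fun x : ι → Eu d => x i) ⁻¹' cube d) ∩
        ⋂ i, ⋂ j, ⋂ (_ : i ≠ j), {x : ι → Eu d | δ' ≤ dist (x i) (x j)} := by
      ext x
      simp only [sep, Set.mem_setOf_eq, Set.mem_inter_iff, Set.mem_iInter, Set.mem_preimage]
    rw [this]
    refine IsClosed.inter (isClosed_iInter fun i => isClosed_cube.preimage (continuous_apply i)) ?_
    refine isClosed_iInter fun i => isClosed_iInter fun j => isClosed_iInter fun _ => ?_
    exact isClosed_le continuous_const ((continuous_apply i).dist (continuous_apply j))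
  exact (isCompact_univ_pi fun _ => isCompact_cube).of_isClosed_subset hclosed hsub

lemma vIndex_eq_iff (x : ι → Eu d) (ω : Eu d) (i : ι) :
    vIndex x ω = i ↔ (∀ j, dist (x i) ω ≤ dist (x j) ω) ∧
      ∀ k, k < i → ¬(∀ j, dist (x k) ω ≤ dist (x j) ω) := by
  classical
  have hne : (Finset.univ.filter fun i' => ∀ j, dist (x i') ω ≤ dist (x j) ω).Nonempty := by
    obtain ⟨i0, -, hi0⟩ := Finset.exists_min_image Finset.univ
      (fun j => dist (x j) ω) ⟨Classical.arbitrary ι, Finset.mem_univ _⟩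
    exact ⟨i0, Finset.mem_filter.2 ⟨Finset.mem_univ _, fun j => hi0 j (Finset.mem_univ _)⟩⟩
  unfold vIndex
  constructor
  · intro h
    constructor
    · have := Finset.min'_mem _ hne
      rw [h] at this
      exact (Finset.mem_filter.mp this).2
    · intro k hk hkP
      have := Finset.min'_le (Finset.univ.filter fun i' => ∀ j, dist (x i') ω ≤ dist (x j) ω) k
        (Finset.mem_filter.mpr ⟨Finset.mem_univ _, hkP⟩)
      rw [h] at this
      exact absurd this (not_le.mpr hk)
  · rintro ⟨hi, hmin⟩
    apply le_antisymm
    · exact Finset.min'_le _ _ (Finset.mem_filter.mpr ⟨Finset.mem_univ _, hi⟩)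
    · by_contra hcon
      push_neg at hcon
      have hmem := Finset.min'_mem _ hne
      exact hmin _ hcon (Finset.mem_filter.mp hmem).2

lemma vIndex_spec (x : ι → Eu d) (ω : Eu d) (j : ι) :
    dist (x (vIndex x ω)) ω ≤ dist (x j) ω :=
  ((vIndex_eq_iff x ω _).mp rfl).1 j

lemma vIndex_eq_of_strict {x : ι → Eu d} {ω : Eu d} {i : ι}
    (h : ∀ j, j ≠ i → dist (x i) ω < dist (x j) ω) : vIndex x ω = i := by
  rw [vIndex_eq_iff]
  constructor
  · intro j
    rcases eq_or_ne j i with rfl | hj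
    · exact le_rfl
    · exact (h j hj).le
  · intro k hk hkP
    exact absurd (hkP i) (not_le.mpr (h k hk.ne))

lemma measurableSet_fiber (x : ι → Eu d) (i : ι) :
    MeasurableSet {ω : Eu d | vIndex x ω = i} := by
  have hA : ∀ k : ι, MeasurableSet {ω : Eu d | ∀ j, dist (x k) ω ≤ dist (x j) ω} := by
    intro k
    have : IsClosed {ω : Eu d | ∀ j, dist (x k) ω ≤ dist (x j) ω} := by
      have : {ω : Eu d | ∀ j, dist (x k) ω ≤ dist (x j) ω} =
          ⋂ j, {ω : Eu d | dist (x k) ω ≤ dist (x j) ω} := by ext; simp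
      rw [this]
      exact isClosed_iInter fun j =>
        isClosed_le (continuous_const.dist continuous_id) (continuous_const.dist continuous_id)
    exact this.measurableSet
  have : {ω : Eu d | vIndex x ω = i} =
      {ω : Eu d | ∀ j, dist (x i) ω ≤ dist (x j) ω} ∩
      ⋂ k, ⋂ (_ : k < i), {ω : Eu d | ∀ j, dist (x k) ω ≤ dist (x j) ω}ᶜ := by
    ext ω
    simp only [Set.mem_setOf_eq, Set.mem_inter_iff, Set.mem_iInter, Set.mem_compl_iff,
      vIndex_eq_iff]
  rw [this]
  exact (hA i).inter (MeasurableSet.iInter fun k => MeasurableSet.iInter fun _ => (hA k).compl)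

lemma measurable_gfun (Λ : ι → ι → ℝ) (x : ι → Eu d) : Measurable (gfun Λ x) := by
  have heq : gfun Λ x = fun ω => ∑ i, Set.indicator {ω' : Eu d | vIndex x ω' = i}
      (fun ω' => ∑ j, Λ i j * ‖x j - ω'‖ ^ 2) ω := by
    funext ω
    rw [Finset.sum_eq_single (vIndex x ω)]
    · rw [Set.indicator_of_mem (by exact rfl)]
      rfl
    · intro b _ hb
      refine Set.indicator_of_notMem ?_ _
      intro h
      exact hb (Eq.symm h)
    · intro h; exact absurd (Finset.mem_univ _) h
  rw [heq]
  refine Finset.measurable_sum _ fun i _ => Measurable.indicator ?_ (measurableSet_fiber x i)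
  refine Finset.measurable_sum _ fun j _ => ?_
  exact (continuous_const.mul (((continuous_const.sub continuous_id).norm).pow 2)).measurable

end Lemmas

section Bad
variable {d : ℕ} {ι : Type*} [Fintype ι] [LinearOrder ι] [Nonempty ι]

def bad {d : ℕ} {ι : Type*} [Fintype ι] (y : ι → Eu d) (t : ℝ) : Set (Eu d) :=
  {ω | ω ∈ cube d ∧ ∃ i j, i ≠ j ∧ |dist (y i) ω - dist (y j) ω| ≤ t}

omit [LinearOrder ι] [Nonempty ι] in
lemma measurableSet_bad (y : ι → Eu d) (t : ℝ) : MeasurableSet (bad y t) := by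
  have : bad y t = cube d ∩ ⋃ i, ⋃ j, ⋃ (_ : i ≠ j),
      {ω : Eu d | |dist (y i) ω - dist (y j) ω| ≤ t} := by
    ext ω
    simp only [bad, Set.mem_setOf_eq, Set.mem_inter_iff, Set.mem_iUnion]
    tauto
  rw [this]
  refine isClosed_cube.measurableSet.inter ?_
  refine MeasurableSet.iUnion fun i => MeasurableSet.iUnion fun j => MeasurableSet.iUnion fun _ => ?_
  refine (isClosed_le ?_ continuous_const).measurableSet
  exact (((continuous_const.dist continuous_id).sub (continuous_const.dist continuous_id)).abs)

omit [LinearOrder ι] [Nonempty ι] in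
lemma bad_mono (y : ι → Eu d) {t t' : ℝ} (h : t ≤ t') : bad y t ⊆ bad y t' := by
  rintro ω ⟨hc, i, j, hij, habs⟩
  exact ⟨hc, i, j, hij, habs.trans h⟩

omit [LinearOrder ι] [Nonempty ι] in
lemma bad_shift {y y' : ι → Eu d} {r t : ℝ} (h : ∀ i, dist (y i) (y' i) ≤ r) :
    bad y t ⊆ bad y' (t + 2 * r) := by
  rintro ω ⟨hc, i, j, hij, habs⟩
  refine ⟨hc, i, j, hij, ?_⟩
  have h1 := abs_dist_sub_le (y' i) (y i) ω
  have h2 := abs_dist_sub_le (y' j) (y j) ω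
  have h1' := h i; have h2' := h j
  rw [dist_comm] at h1' h2'
  obtain ⟨a1, a2⟩ := abs_le.mp h1
  obtain ⟨b1, b2⟩ := abs_le.mp h2
  obtain ⟨c1, c2⟩ := abs_le.mp habs
  rw [abs_le]
  constructor <;> linarith

omit [Fintype ι] [LinearOrder ι] [Nonempty ι] in
lemma volume_bisector {a b : Eu d} (hab : a ≠ b) :
    volume {ω : Eu d | dist a ω = dist b ω} = 0 := by
  classical
  set L : Eu d →ₗ[ℝ] ℝ :=
    { toFun := fun ω => inner ℝ (b - a) ω
      map_add' := fun u v => inner_add_right _ _ _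
      map_smul' := fun c u => real_inner_smul_right _ _ c }
  have hLab : L (b - a) = ‖b - a‖^2 := real_inner_self_eq_norm_sq (b - a)
  have hLne : ‖b - a‖^2 ≠ 0 := by
    have : b - a ≠ 0 := sub_ne_zero.mpr (Ne.symm hab)
    exact pow_ne_zero 2 (norm_ne_zero_iff.mpr this)
  set c : ℝ := (‖b‖^2 - ‖a‖^2) / 2
  have hset : {ω : Eu d | dist a ω = dist b ω} = {ω : Eu d | L ω = c} := by
    ext ω
    simp only [Set.mem_setOf_eq, dist_eq_norm]
    constructor
    · intro h
      have h2 : ‖a - ω‖^2 = ‖b - ω‖^2 := by rw [h]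
      rw [@norm_sub_sq_real, @norm_sub_sq_real] at h2
      simp only [L, LinearMap.coe_mk, AddHom.coe_mk, inner_sub_left, c]
      linarith
    · intro h
      have h2 : ‖a - ω‖^2 = ‖b - ω‖^2 := by
        rw [@norm_sub_sq_real, @norm_sub_sq_real]
        simp only [L, LinearMap.coe_mk, AddHom.coe_mk, inner_sub_left, c] at h
        linarith
      have := abs_eq_abs.mpr (Or.inl (by nlinarith [norm_nonneg (a - ω), norm_nonneg (b - ω)] :
        ‖a - ω‖ = ‖b - ω‖))
      nlinarith [norm_nonneg (a - ω), norm_nonneg (b - ω), h2,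
        sq_abs (‖a - ω‖), sq_abs (‖b - ω‖)]
  rw [hset]
  set v : Eu d := (c / ‖b - a‖^2) • (b - a) with hv
  have hLv : L v = c := by
    rw [hv, LinearMap.map_smul, smul_eq_mul, hLab, div_mul_cancel₀ _ hLne]
  set S : AffineSubspace ℝ (Eu d) := AffineSubspace.mk' v (LinearMap.ker L) with hS
  have hset2 : {ω : Eu d | L ω = c} = (S : Set (Eu d)) := by
    ext ω
    rw [SetLike.mem_coe, hS, AffineSubspace.mem_mk', LinearMap.mem_ker,
      vsub_eq_sub, map_sub, hLv]
    simp only [Set.mem_setOf_eq, sub_eq_zero]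
  have hne_top : S ≠ ⊤ := by
    intro htop
    have hmem : v + (b - a) ∈ S := by rw [htop]; exact AffineSubspace.mem_top _ _ _
    rw [hS, AffineSubspace.mem_mk', vsub_eq_sub, add_sub_cancel_left,
      LinearMap.mem_ker, hLab] at hmem
    exact hLne hmem
  rw [hset2]
  exact Measure.addHaar_affineSubspace volume S hne_top
end Bad

section Comp
variable {d : ℕ} {ι : Type*} [Fintype ι] [LinearOrder ι] [Nonempty ι]

lemma gfun_nonneg {Λ : ι → ι → ℝ} (hΛmem : ∀ i j, Λ i j ∈ Set.Icc (0:ℝ) 1)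
    (x : ι → Eu d) (ω : Eu d) : 0 ≤ gfun Λ x ω :=
  Finset.sum_nonneg fun j _ => mul_nonneg (hΛmem _ j).1 (by positivity)

lemma gfun_le {Λ : ι → ι → ℝ} (hΛmem : ∀ i j, Λ i j ∈ Set.Icc (0:ℝ) 1)
    {x : ι → Eu d} (hx : ∀ i, x i ∈ cube d) {ω : Eu d} (hω : ω ∈ cube d) :
    gfun Λ x ω ≤ (Fintype.card ι : ℝ) * d := by
  calc gfun Λ x ω ≤ ∑ _j : ι, (d:ℝ) := by
        apply Finset.sum_le_sum
        intro j _
        calc Λ (vIndex x ω) j * ‖x j - ω‖^2 ≤ 1 * ‖x j - ω‖^2 :=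
              mul_le_mul_of_nonneg_right (hΛmem _ j).2 (by positivity)
          _ = ‖x j - ω‖^2 := one_mul _
          _ ≤ d := sq_norm_le_of_cube (hx j) hω
    _ = (Fintype.card ι : ℝ) * d := by simp [Finset.sum_const, nsmul_eq_mul]

lemma abs_gfun_le {Λ : ι → ι → ℝ} (hΛmem : ∀ i j, Λ i j ∈ Set.Icc (0:ℝ) 1)
    {x : ι → Eu d} (hx : ∀ i, x i ∈ cube d) {ω : Eu d} (hω : ω ∈ cube d) :
    |gfun Λ x ω| ≤ (Fintype.card ι : ℝ) * d := by
  rw [abs_of_nonneg (gfun_nonneg hΛmem x ω)]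
  exact gfun_le hΛmem hx hω

lemma vIndex_stable {x y : ι → Eu d} {ω : Eu d} {η : ℝ} (hη : 0 ≤ η)
    (hxy : ∀ i, dist (x i) (y i) ≤ η) (hω : ω ∈ cube d) (hbad : ω ∉ bad y (4*η)) :
    vIndex x ω = vIndex y ω := by
  have hgap : ∀ i j, i ≠ j → 4*η < |dist (y i) ω - dist (y j) ω| := by
    intro i j hij
    by_contra hcon
    exact hbad ⟨hω, i, j, hij, not_lt.mp hcon⟩
  apply vIndex_eq_of_strict
  intro j hj
  set i0 := vIndex y ω
  have hmin : dist (y i0) ω ≤ dist (y j) ω := vIndex_spec y ω j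
  have hgap' := hgap j i0 hj
  have h1 : 4*η < dist (y j) ω - dist (y i0) ω := by
    rcases abs_cases (dist (y j) ω - dist (y i0) ω) with ⟨he, _⟩ | ⟨he, _⟩ <;> rw [he] at hgap' <;>
      linarith
  have h2 : |dist (x j) ω - dist (y j) ω| ≤ η := (abs_dist_sub_le _ _ _).trans (hxy j)
  have h3 : |dist (x i0) ω - dist (y i0) ω| ≤ η := (abs_dist_sub_le _ _ _).trans (hxy i0)
  obtain ⟨h2a, h2b⟩ := abs_le.mp h2
  obtain ⟨h3a, h3b⟩ := abs_le.mp h3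
  linarith

lemma gfun_comp {Λ : ι → ι → ℝ} (hΛmem : ∀ i j, Λ i j ∈ Set.Icc (0:ℝ) 1)
    {x y : ι → Eu d} (hx : ∀ i, x i ∈ cube d) (hy : ∀ i, y i ∈ cube d)
    {η : ℝ} (hη : 0 ≤ η) (hxy : ∀ i, dist (x i) (y i) ≤ η) {ω : Eu d} (hω : ω ∈ cube d) :
    |gfun Λ x ω - gfun Λ y ω| ≤ 2 * Real.sqrt d * η * (Fintype.card ι : ℝ)
      + (2 * (Fintype.card ι : ℝ) * d) * Set.indicator (bad y (4*η)) (fun _ => (1:ℝ)) ω := by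
  by_cases hb : ω ∈ bad y (4*η)
  · rw [Set.indicator_of_mem hb]
    have hbd1 := abs_gfun_le hΛmem hx hω
    have hbd2 := abs_gfun_le hΛmem hy hω
    have h1 : (0:ℝ) ≤ 2 * Real.sqrt d * η * (Fintype.card ι : ℝ) := by positivity
    calc |gfun Λ x ω - gfun Λ y ω| ≤ |gfun Λ x ω| + |gfun Λ y ω| := abs_sub _ _
      _ ≤ (Fintype.card ι : ℝ) * d + (Fintype.card ι : ℝ) * d := add_le_add hbd1 hbd2
      _ ≤ _ := by rw [mul_one]; linarith
  · rw [Set.indicator_of_notMem hb, mul_zero, add_zero]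
    have hidx : vIndex x ω = vIndex y ω := vIndex_stable hη hxy hω hb
    rw [gfun, gfun, hidx, ← Finset.sum_sub_distrib]
    calc |∑ j, (Λ (vIndex y ω) j * ‖x j - ω‖^2 - Λ (vIndex y ω) j * ‖y j - ω‖^2)|
        ≤ ∑ j, |Λ (vIndex y ω) j * ‖x j - ω‖^2 - Λ (vIndex y ω) j * ‖y j - ω‖^2| :=
          Finset.abs_sum_le_sum_abs _ _
      _ ≤ ∑ _j : ι, 2 * Real.sqrt d * η := by
          apply Finset.sum_le_sum
          intro j _
          rw [← mul_sub, abs_mul]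
          have hΛ : |Λ (vIndex y ω) j| ≤ 1 := by
            rw [abs_of_nonneg (hΛmem _ j).1]; exact (hΛmem _ j).2
          have hsq : |‖x j - ω‖^2 - ‖y j - ω‖^2| ≤ 2 * Real.sqrt d * η := by
            set A := ‖x j - ω‖; set Bq := ‖y j - ω‖
            have hA : A ≤ Real.sqrt d := norm_le_sqrt_of_cube (hx j) hω
            have hB : Bq ≤ Real.sqrt d := norm_le_sqrt_of_cube (hy j) hω
            have hAB : |A - Bq| ≤ η := by
              have := abs_norm_sub_norm_le (x j - ω) (y j - ω)
              have heq : x j - ω - (y j - ω) = x j - y j := by abel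
              rw [heq] at this
              calc |A - Bq| ≤ ‖x j - y j‖ := this
                _ = dist (x j) (y j) := (dist_eq_norm _ _).symm
                _ ≤ η := hxy j
            have hfactor : |A^2 - Bq^2| = (A + Bq) * |A - Bq| := by
              rw [sq_sub_sq, abs_mul, abs_of_nonneg (by positivity : (0:ℝ) ≤ A + Bq)]
            rw [hfactor]
            calc (A + Bq) * |A - Bq| ≤ (2 * Real.sqrt d) * η := by
                  apply mul_le_mul _ hAB (abs_nonneg _) (by positivity)
                  linarith
              _ = 2 * Real.sqrt d * η := by ring
          calc |Λ (vIndex y ω) j| * |‖x j - ω‖^2 - ‖y j - ω‖^2|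
              ≤ 1 * (2 * Real.sqrt d * η) :=
                mul_le_mul hΛ hsq (abs_nonneg _) one_pos.le
            _ = 2 * Real.sqrt d * η := one_mul _
      _ = 2 * Real.sqrt d * η * (Fintype.card ι : ℝ) := by
          rw [Finset.sum_const, nsmul_eq_mul, Finset.card_univ]; ring

end Comp

section Unif
variable {d : ℕ} {ι : Type*} [Fintype ι] [LinearOrder ι] [Nonempty ι]

omit [LinearOrder ι] [Nonempty ι] in
lemma bad_tendsto_zero (B : ℝ) (hB : 0 < B) (P : Measure (Eu d)) [IsProbabilityMeasure P]
    (hPB : ∀ s : Set (Eu d), MeasurableSet s → P s ≤ ENNReal.ofReal B * volume s)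
    {y : ι → Eu d} (hy : ∀ i j, i ≠ j → y i ≠ y j) :
    Filter.Tendsto (fun m : ℕ => P (bad y (1/((m:ℝ)+1)))) Filter.atTop (nhds 0) := by
  classical
  set s : ι × ι → ℕ → Set (Eu d) := fun p m =>
    {ω : Eu d | |dist (y p.1) ω - dist (y p.2) ω| ≤ 1/((m:ℝ)+1)} with hs
  have hsmeas : ∀ p m, MeasurableSet (s p m) := by
    intro p m
    exact (isClosed_le (((continuous_const.dist continuous_id).sub
      (continuous_const.dist continuous_id)).abs) continuous_const).measurableSet
  have hpair : ∀ p ∈ Finset.univ.offDiag (α := ι),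
      Filter.Tendsto (fun m : ℕ => P (s p m)) Filter.atTop (nhds 0) := by
    intro p hp
    have hpne : p.1 ≠ p.2 := (Finset.mem_offDiag.mp hp).2.2
    have hanti : Antitone (s p) := by
      intro m m' hmm ω hω
      simp only [hs, Set.mem_setOf_eq] at hω ⊢
      refine le_trans hω ?_
      have hcast : (m:ℝ) ≤ m' := Nat.cast_le.mpr hmm
      apply one_div_le_one_div_of_le
      · positivity
      · linarith
    have hint : P (⋂ m, s p m) = 0 := by
      apply measure_mono_null (t := {ω : Eu d | dist (y p.1) ω = dist (y p.2) ω})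
      · intro ω hω
        simp only [Set.mem_iInter, hs, Set.mem_setOf_eq] at hω
        have habs : |dist (y p.1) ω - dist (y p.2) ω| ≤ 0 := by
          by_contra hcon
          push_neg at hcon
          obtain ⟨m, hm⟩ := exists_nat_one_div_lt hcon
          exact absurd (hω m) (not_le.mpr (by exact_mod_cast hm))
        have := abs_nonneg (dist (y p.1) ω - dist (y p.2) ω)
        have : |dist (y p.1) ω - dist (y p.2) ω| = 0 := le_antisymm habs this
        simpa [sub_eq_zero] using abs_eq_zero.mp this
      · refine le_antisymm ?_ zero_le
        calc P {ω : Eu d | dist (y p.1) ω = dist (y p.2) ω}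
            ≤ ENNReal.ofReal B * volume {ω : Eu d | dist (y p.1) ω = dist (y p.2) ω} :=
              hPB _ (isClosed_eq (continuous_const.dist continuous_id)
                (continuous_const.dist continuous_id)).measurableSet
          _ = 0 := by rw [volume_bisector (hy _ _ hpne), mul_zero]
    have := tendsto_measure_iInter_atTop (μ := P)
      (fun m => (hsmeas p m).nullMeasurableSet) hanti ⟨0, measure_ne_top P _⟩
    rw [hint] at this
    exact this
  have hsum : Filter.Tendsto
      (fun m : ℕ => ∑ p ∈ Finset.univ.offDiag (α := ι), P (s p m)) Filter.atTop (nhds 0) := by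
    have := tendsto_finset_sum (Finset.univ.offDiag (α := ι)) hpair
    simpa using this
  apply tendsto_of_tendsto_of_tendsto_of_le_of_le tendsto_const_nhds hsum
  · intro m; exact zero_le
  · intro m
    have hsub : bad y (1/((m:ℝ)+1)) ⊆ ⋃ p ∈ Finset.univ.offDiag (α := ι), s p m := by
      rintro ω ⟨hc, i, j, hij, habs⟩
      have hpmem : (⟨i, j⟩ : ι × ι) ∈ Finset.univ.offDiag :=
        Finset.mem_offDiag.mpr ⟨Finset.mem_univ _, Finset.mem_univ _, hij⟩
      refine Set.mem_biUnion hpmem ?_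
      show |dist (y i) ω - dist (y j) ω| ≤ 1/((m:ℝ)+1)
      exact habs
    exact le_trans (measure_mono hsub) (measure_biUnion_finset_le _ _)

lemma exists_unif {δ B : ℝ} (hδ : 0 < δ) (hB : 0 < B)
    (P : Measure (Eu d)) [IsProbabilityMeasure P]
    (hPB : ∀ s : Set (Eu d), MeasurableSet s → P s ≤ ENNReal.ofReal B * volume s)
    {ε : ℝ} (hε : 0 < ε) :
    ∃ η : ℝ, 0 < η ∧ ∀ y ∈ (sep (δ/2) : Set (ι → Eu d)), (P (bad y (4*η))).toReal ≤ ε := by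
  classical
  have hch : ∀ y ∈ (sep (δ/2) : Set (ι → Eu d)), ∃ t : ℝ, 0 < t ∧
      (P (bad y (6*t))).toReal ≤ ε := by
    intro y hy
    have hyne : ∀ i j, i ≠ j → y i ≠ y j := by
      intro i j hij
      have := hy.2 i j hij
      intro heq
      rw [heq, dist_self] at this
      linarith
    have htend := bad_tendsto_zero B hB P hPB hyne
    have hev : ∀ᶠ m : ℕ in Filter.atTop, P (bad y (1/((m:ℝ)+1))) < ENNReal.ofReal ε :=
      Filter.Tendsto.eventually_lt_const (ENNReal.ofReal_pos.mpr hε) htend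
    obtain ⟨m, hm⟩ := hev.exists
    refine ⟨(1/((m:ℝ)+1))/6, by positivity, ?_⟩
    have h6 : 6 * ((1/((m:ℝ)+1))/6) = 1/((m:ℝ)+1) := by ring
    rw [h6]
    have := hm.le
    calc (P (bad y (1/((m:ℝ)+1)))).toReal ≤ (ENNReal.ofReal ε).toReal :=
          ENNReal.toReal_mono (by simp) this
      _ = ε := ENNReal.toReal_ofReal hε.le
  choose r hr0 hrP using hch
  obtain ⟨T, hT⟩ := (isCompact_sepSet (ι := ι) (d := d) (δ/2)).elim_nhds_subcover'
    (fun y hy => Metric.ball y (r y hy)) (fun y hy => Metric.ball_mem_nhds _ (hr0 y hy))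
  by_cases hTe : T.Nonempty
  · refine ⟨T.inf' hTe (fun z => r z.1 z.2), ?_, ?_⟩
    · rw [Finset.lt_inf'_iff]
      intro z hz
      exact hr0 _ _
    · intro y hy
      have := hT hy
      simp only [Set.mem_iUnion] at this
      obtain ⟨z, hzT, hyz⟩ := this
      rw [Metric.mem_ball] at hyz
      have hcoord : ∀ i, dist (y i) (z.1 i) ≤ r z.1 z.2 :=
        fun i => (dist_le_pi_dist y z.1 i).trans hyz.le
      have hηle : T.inf' hTe (fun z => r z.1 z.2) ≤ r z.1 z.2 := Finset.inf'_le _ hzT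
      have hsub : bad y (4 * T.inf' hTe (fun z => r z.1 z.2)) ⊆ bad z.1 (6 * r z.1 z.2) := by
        refine (bad_shift hcoord).trans (bad_mono _ ?_)
        linarith
      calc (P (bad y (4 * T.inf' hTe (fun z => r z.1 z.2)))).toReal
          ≤ (P (bad z.1 (6 * r z.1 z.2))).toReal :=
            ENNReal.toReal_mono (measure_ne_top P _) (measure_mono hsub)
        _ ≤ ε := hrP _ _
  · refine ⟨1, one_pos, ?_⟩
    intro y hy
    exfalso
    have := hT hy
    rw [Finset.not_nonempty_iff_eq_empty.mp hTe] at this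
    simpa using this

end Unif

open ProbabilityTheory Filter

section SLLN
variable {d : ℕ}

lemma slln_aux {Ω : Type*} [MeasurableSpace Ω] (μ : Measure Ω) [IsProbabilityMeasure μ]
    (P : Measure (Eu d)) [IsProbabilityMeasure P]
    (X : ℕ → Ω → Eu d) (hmeas : ∀ n, Measurable (X n))
    (hindep : iIndepFun X μ)
    (hlaw : ∀ n, Measure.map (X n) μ = P)
    (f : Eu d → ℝ) (hf : Measurable f) (C : ℝ) (hC : ∀ᵐ ω ∂P, |f ω| ≤ C) :
    ∀ᵐ ϖ ∂μ, Tendsto (fun n : ℕ => (1/(n:ℝ)) * ∑ k ∈ Finset.range n, f (X k ϖ))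
      atTop (nhds (∫ ω, f ω ∂P)) := by
  have hmsls : MeasurableSet {ω : Eu d | |f ω| ≤ C} := measurableSet_le hf.abs measurable_const
  have hbd : ∀ k, ∀ᵐ ϖ ∂μ, ‖(f ∘ X k) ϖ‖ ≤ C := by
    intro k
    have h1 : ∀ᵐ ω ∂(Measure.map (X k) μ), |f ω| ≤ C := by rw [hlaw k]; exact hC
    have h2 := (ae_map_iff (hmeas k).aemeasurable hmsls).mp h1
    filter_upwards [h2] with ϖ hϖ
    simpa [Real.norm_eq_abs] using hϖ
  have hint : Integrable (f ∘ X 0) μ := by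
    refine Integrable.mono' (integrable_const C) ((hf.comp (hmeas 0)).aestronglyMeasurable) ?_
    exact hbd 0
  have hindep' : Pairwise (Function.onFun (IndepFun · · μ) (fun k => f ∘ X k)) := by
    intro i j hij
    exact (hindep.indepFun hij).comp hf hf
  have hident : ∀ k, IdentDistrib (f ∘ X k) (f ∘ X 0) μ μ := by
    intro k
    refine IdentDistrib.comp ?_ hf
    exact ⟨(hmeas k).aemeasurable, (hmeas 0).aemeasurable, by rw [hlaw k, hlaw 0]⟩
  have hsl := strong_law_ae_real (fun k => f ∘ X k) hint hindep' hident
  have hEeq : (∫ ϖ, (f ∘ X 0) ϖ ∂μ) = ∫ ω, f ω ∂P := by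
    rw [← hlaw 0]
    exact (integral_map (hmeas 0).aemeasurable hf.aestronglyMeasurable).symm
  rw [hEeq] at hsl
  filter_upwards [hsl] with ϖ hϖ
  convert hϖ using 2 with n
  rw [one_div, div_eq_mul_inv, mul_comm]
  rfl

end SLLN

open ProbabilityTheory Filter

set_option maxHeartbeats 2000000

theorem stmt11 {d : ℕ} {ι : Type*} [Fintype ι] [LinearOrder ι] [Nonempty ι]
    (Λ : ι → ι → ℝ) (hΛmem : ∀ i j, Λ i j ∈ Set.Icc (0:ℝ) 1)
    (hΛsymm : ∀ i j, Λ i j = Λ j i) (hΛ0 : ∀ i, Λ i i = 1)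
    (δ B : ℝ) (hδ : 0 < δ) (hB : 0 < B)
    (P : Measure (Eu d)) [IsProbabilityMeasure P] (hPcube : P (cube d) = 1)
    (hPB : ∀ s : Set (Eu d), MeasurableSet s →
      P s ≤ ENNReal.ofReal B * volume s)
    {Ω : Type*} [MeasurableSpace Ω] (μ : Measure Ω) [IsProbabilityMeasure μ]
    (X : ℕ → Ω → Eu d) (hmeas : ∀ n, Measurable (X n))
    (hindep : iIndepFun X μ)
    (hlaw : ∀ n, Measure.map (X n) μ = P) :
    ∀ᵐ ϖ ∂μ,
      Tendsto (fun n : ℕ =>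
          ⨆ x : (sep δ : Set (ι → Eu d)),
            |(1 / (n:ℝ)) * ∑ k ∈ Finset.range n, gfun Λ x.1 (X k ϖ)
              - ∫ ω, gfun Λ x.1 ω ∂P|)
        atTop (nhds 0) := by
  classical
  -- constants
  set Cb : ℝ := (Fintype.card ι : ℝ) * d with hCbdef
  have hCb0 : 0 ≤ Cb := by rw [hCbdef]; positivity
  set K2 : ℝ := 2 * Cb with hK2def
  have hK20 : 0 ≤ K2 := by rw [hK2def]; linarith
  set sd : ℝ := Real.sqrt d with hsddef
  have hsd0 : 0 ≤ sd := Real.sqrt_nonneg _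
  set cC : ℝ := 4 * sd * (Fintype.card ι : ℝ) + 2 * K2 with hcCdef
  have hcC0 : 0 ≤ cC := by
    rw [hcCdef]
    have : (0:ℝ) ≤ (Fintype.card ι : ℝ) := by positivity
    nlinarith
  have hcube_meas : MeasurableSet (cube d) := isClosed_cube.measurableSet
  have haeP : ∀ᵐ ω ∂P, ω ∈ cube d := by
    have hc : P (cube d)ᶜ = 0 := by
      rw [measure_compl hcube_meas (measure_ne_top _ _), hPcube, measure_univ, tsub_self]
    exact mem_ae_iff.mpr hc
  -- integrability over P
  have hPint : ∀ x : ι → Eu d, (∀ i, x i ∈ cube d) → Integrable (gfun Λ x) P := by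
    intro x hx
    refine Integrable.mono' (integrable_const Cb) (measurable_gfun Λ x).aestronglyMeasurable ?_
    filter_upwards [haeP] with ω hω
    rw [hCbdef, Real.norm_eq_abs]
    exact abs_gfun_le hΛmem hx hω
  have hPbound : ∀ x : ι → Eu d, (∀ i, x i ∈ cube d) → |∫ ω, gfun Λ x ω ∂P| ≤ Cb := by
    intro x hx
    have hb : ∀ᵐ ω ∂P, ‖gfun Λ x ω‖ ≤ Cb := by
      filter_upwards [haeP] with ω hω
      rw [hCbdef, Real.norm_eq_abs]
      exact abs_gfun_le hΛmem hx hω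
    have := norm_integral_le_of_norm_le_const (μ := P) hb
    rwa [Real.norm_eq_abs, probReal_univ, mul_one] at this
  -- choose η m
  have hEx : ∀ m : ℕ, ∃ η : ℝ, 0 < η ∧ η ≤ 1/((m:ℝ)+1) ∧
      ∀ y ∈ (sep (δ/2) : Set (ι → Eu d)), (P (bad y (4*η))).toReal ≤ 1/((m:ℝ)+1) := by
    intro m
    obtain ⟨η0, hη0, hP0⟩ := exists_unif (ι := ι) hδ hB P hPB
      (ε := 1/((m:ℝ)+1)) (by positivity)
    refine ⟨min η0 (1/((m:ℝ)+1)), lt_min hη0 (by positivity), min_le_right _ _, ?_⟩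
    intro y hy
    refine le_trans (ENNReal.toReal_mono (measure_ne_top P _)
      (measure_mono (bad_mono _ ?_))) (hP0 y hy)
    have := min_le_left η0 (1/((m:ℝ)+1))
    linarith
  choose η hη0 hη1 hηP using hEx
  -- nets
  have hNet : ∀ m : ℕ, ∃ F : Finset (ι → Eu d), (∀ y ∈ F, y ∈ (sep δ : Set (ι → Eu d))) ∧
      ∀ x ∈ (sep δ : Set (ι → Eu d)), ∃ y ∈ F, dist x y < η m := by
    intro m
    obtain ⟨T, hT1, hT2⟩ := (isCompact_sepSet (ι := ι) (d := d) δ).elim_nhds_subcover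
      (fun y => Metric.ball y (η m)) (fun y _ => Metric.ball_mem_nhds y (hη0 m))
    refine ⟨T, hT1, ?_⟩
    intro x hx
    have := hT2 hx
    simp only [Set.mem_iUnion] at this
    obtain ⟨y, hyT, hxy⟩ := this
    exact ⟨y, hyT, Metric.mem_ball.mp hxy⟩
  choose F hFsep hFnet using hNet
  have hsep_half : (sep δ : Set (ι → Eu d)) ⊆ sep (δ/2) := by
    intro x hx
    exact ⟨hx.1, fun i j hij => le_trans (by linarith) (hx.2 i j hij)⟩
  -- a.s. events
  have hXcube : ∀ᵐ ϖ ∂μ, ∀ k, X k ϖ ∈ cube d := by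
    rw [ae_all_iff]
    intro k
    have h1 : ∀ᵐ ω ∂(Measure.map (X k) μ), ω ∈ cube d := by rw [hlaw k]; exact haeP
    exact (ae_map_iff (hmeas k).aemeasurable hcube_meas).mp h1
  have hGconv : ∀ᵐ ϖ ∂μ, ∀ m : ℕ, ∀ y ∈ (↑(F m) : Set (ι → Eu d)),
      Tendsto (fun n : ℕ => (1/(n:ℝ)) * ∑ k ∈ Finset.range n, gfun Λ y (X k ϖ)) atTop
        (nhds (∫ ω, gfun Λ y ω ∂P)) := by
    rw [ae_all_iff]
    intro m
    rw [ae_ball_iff (F m).countable_toSet]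
    intro y hy
    have hysep : y ∈ (sep δ : Set (ι → Eu d)) := hFsep m y hy
    refine slln_aux μ P X hmeas hindep hlaw (gfun Λ y) (measurable_gfun Λ y) Cb ?_
    filter_upwards [haeP] with ω hω
    rw [hCbdef]
    exact abs_gfun_le hΛmem hysep.1 hω
  have hBconv : ∀ᵐ ϖ ∂μ, ∀ m : ℕ, ∀ y ∈ (↑(F m) : Set (ι → Eu d)),
      Tendsto (fun n : ℕ => (1/(n:ℝ)) * ∑ k ∈ Finset.range n,
          Set.indicator (bad y (4*η m)) (fun _ => (1:ℝ)) (X k ϖ)) atTop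
        (nhds ((P (bad y (4*η m))).toReal)) := by
    rw [ae_all_iff]
    intro m
    rw [ae_ball_iff (F m).countable_toSet]
    intro y hy
    have hmeasb := measurableSet_bad y (4*η m)
    have hintegral : ∫ ω, Set.indicator (bad y (4*η m)) (fun _ => (1:ℝ)) ω ∂P
        = (P (bad y (4*η m))).toReal := by
      rw [integral_indicator_const (1:ℝ) hmeasb, smul_eq_mul, mul_one]; rfl
    rw [← hintegral]
    refine slln_aux μ P X hmeas hindep hlaw _ (measurable_const.indicator hmeasb) 1 ?_
    refine Filter.Eventually.of_forall (fun ω => ?_)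
    by_cases h : ω ∈ bad y (4*η m) <;> simp [Set.indicator_apply, h]
  filter_upwards [hXcube, hGconv, hBconv] with ϖ hω1 hω2 hω3
  -- the empty case
  by_cases hempty : Nonempty (↥(sep δ : Set (ι → Eu d)))
  swap
  · haveI : IsEmpty ((sep δ : Set (ι → Eu d))) := not_nonempty_iff.mp hempty
    simp only [Real.iSup_of_isEmpty]
    exact tendsto_const_nhds
  -- uniform bounds
  have hn1 : ∀ n : ℕ, (1/(n:ℝ)) * (n:ℝ) ≤ 1 := by
    intro n
    rcases Nat.eq_zero_or_pos n with rfl | hn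
    · simp
    · rw [one_div_mul_cancel (by exact_mod_cast hn.ne' : (n:ℝ) ≠ 0)]
  have h1nn : ∀ n : ℕ, (0:ℝ) ≤ 1/(n:ℝ) := fun n => by positivity
  have hmean_bound : ∀ (n : ℕ) (x : ι → Eu d), (∀ i, x i ∈ cube d) →
      |(1/(n:ℝ)) * ∑ k ∈ Finset.range n, gfun Λ x (X k ϖ)| ≤ Cb := by
    intro n x hx
    rw [abs_mul, abs_of_nonneg (h1nn n)]
    calc (1/(n:ℝ)) * |∑ k ∈ Finset.range n, gfun Λ x (X k ϖ)|
        ≤ (1/(n:ℝ)) * ((n:ℝ) * Cb) := by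
          refine mul_le_mul_of_nonneg_left ?_ (h1nn n)
          calc |∑ k ∈ Finset.range n, gfun Λ x (X k ϖ)|
              ≤ ∑ k ∈ Finset.range n, |gfun Λ x (X k ϖ)| := Finset.abs_sum_le_sum_abs _ _
            _ ≤ ∑ _k ∈ Finset.range n, Cb := by
                refine Finset.sum_le_sum fun k _ => ?_
                rw [hCbdef]
                exact abs_gfun_le hΛmem hx (hω1 k)
            _ = (n:ℝ) * Cb := by rw [Finset.sum_const, Finset.card_range, nsmul_eq_mul]
      _ = ((1/(n:ℝ)) * (n:ℝ)) * Cb := by ring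
      _ ≤ 1 * Cb := mul_le_mul_of_nonneg_right (hn1 n) hCb0
      _ = Cb := one_mul _
  set A : ℕ → ↥(sep δ : Set (ι → Eu d)) → ℝ := fun n x =>
    (1/(n:ℝ)) * ∑ k ∈ Finset.range n, gfun Λ x.1 (X k ϖ) - ∫ ω, gfun Λ x.1 ω ∂P with hAdef
  have hsup_bdd : ∀ n, BddAbove (Set.range (fun x : ↥(sep δ : Set (ι → Eu d)) => |A n x|)) := by
    intro n
    refine ⟨2*Cb, ?_⟩
    rintro v ⟨x, rfl⟩
    calc |A n x| ≤ |(1/(n:ℝ)) * ∑ k ∈ Finset.range n, gfun Λ x.1 (X k ϖ)|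
          + |∫ ω, gfun Λ x.1 ω ∂P| := abs_sub _ _
      _ ≤ Cb + Cb := add_le_add (hmean_bound n x.1 x.2.1) (hPbound x.1 x.2.1)
      _ = 2*Cb := by ring
  have hsup_nonneg : ∀ n, 0 ≤ ⨆ x : ↥(sep δ : Set (ι → Eu d)), |A n x| := by
    intro n
    exact le_trans (abs_nonneg _) (le_ciSup (hsup_bdd n) hempty.some)
  rw [Metric.tendsto_atTop]
  intro ε hε
  obtain ⟨m, hm⟩ : ∃ m : ℕ, cC / ((m:ℝ)+1) < ε/2 := by
    obtain ⟨m, hm⟩ := exists_nat_gt (cC / (ε/2))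
    refine ⟨m, ?_⟩
    rw [div_lt_iff₀ (by positivity : (0:ℝ) < (m:ℝ)+1)]
    have h2 : cC < (m:ℝ) * (ε/2) := (div_lt_iff₀ (by linarith)).mp hm
    nlinarith
  -- eventual smallness on the net
  have hev : ∀ᶠ n : ℕ in atTop, ∀ y ∈ F m,
      |(1/(n:ℝ)) * ∑ k ∈ Finset.range n, gfun Λ y (X k ϖ) - ∫ ω, gfun Λ y ω ∂P| < ε/8 ∧
      K2 * |(1/(n:ℝ)) * ∑ k ∈ Finset.range n,
          Set.indicator (bad y (4*η m)) (fun _ => (1:ℝ)) (X k ϖ)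
        - (P (bad y (4*η m))).toReal| < ε/8 := by
    rw [eventually_all_finset]
    intro y hy
    have hg := hω2 m y (Finset.mem_coe.mpr hy)
    have hb := hω3 m y (Finset.mem_coe.mpr hy)
    have h8 : (0:ℝ) < ε/8 := by positivity
    obtain ⟨N1, hN1⟩ := Metric.tendsto_atTop.mp hg (ε/8) h8
    obtain ⟨N2, hN2⟩ := Metric.tendsto_atTop.mp hb (ε/(8*(K2+1))) (by positivity)
    refine Filter.eventually_atTop.mpr ⟨max N1 N2, fun n hn => ⟨?_, ?_⟩⟩
    · have := hN1 n (le_trans (le_max_left _ _) hn)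
      rwa [Real.dist_eq] at this
    · have hd := hN2 n (le_trans (le_max_right _ _) hn)
      rw [Real.dist_eq] at hd
      set t : ℝ := ε/(8*(K2+1)) with htdef
      have ht : (8*(K2+1)) * t = ε := by rw [htdef]; field_simp
      have htpos : 0 < t := by rw [htdef]; positivity
      have := mul_le_mul_of_nonneg_left hd.le hK20
      nlinarith
  obtain ⟨N, hN⟩ := Filter.eventually_atTop.mp hev
  refine ⟨N, fun n hn => ?_⟩
  rw [Real.dist_eq, sub_zero, abs_of_nonneg (hsup_nonneg n)]
  have hfinal : cC * (1/((m:ℝ)+1)) + (ε/8 + ε/8) < ε := by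
    rw [mul_one_div]
    linarith
  refine lt_of_le_of_lt (ciSup_le fun x => ?_) hfinal
  -- per-x estimate
  obtain ⟨y, hyF, hxy⟩ := hFnet m x.1 x.2
  have hy_sep : y ∈ (sep δ : Set (ι → Eu d)) := hFsep m y hyF
  have hxyi : ∀ i, dist (x.1 i) (y i) ≤ η m := fun i => (dist_le_pi_dist _ _ i).trans hxy.le
  obtain ⟨hA1, hA2⟩ := hN n hn y hyF
  set ε1 : ℝ := 2 * sd * (η m) * (Fintype.card ι : ℝ) with hε1def
  have hε1nn : 0 ≤ ε1 := by
    rw [hε1def]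
    have := (hη0 m).le
    positivity
  set Mn : ℝ := (1/(n:ℝ)) * ∑ k ∈ Finset.range n,
      Set.indicator (bad y (4*η m)) (fun _ => (1:ℝ)) (X k ϖ) with hMndef
  set pB : ℝ := (P (bad y (4*η m))).toReal with hpBdef
  have hcomp : ∀ ω : Eu d, ω ∈ cube d →
      |gfun Λ x.1 ω - gfun Λ y ω| ≤ ε1
        + K2 * Set.indicator (bad y (4*η m)) (fun _ => (1:ℝ)) ω := by
    intro ω hω
    have := gfun_comp hΛmem x.2.1 hy_sep.1 (hη0 m).le hxyi hω
    rw [hε1def, hK2def, hCbdef]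
    calc |gfun Λ x.1 ω - gfun Λ y ω|
        ≤ 2 * Real.sqrt d * (η m) * (Fintype.card ι : ℝ)
          + (2 * (Fintype.card ι : ℝ) * d) * Set.indicator (bad y (4*η m)) (fun _ => (1:ℝ)) ω :=
          this
      _ = 2 * Real.sqrt d * (η m) * (Fintype.card ι : ℝ)
          + (2 * ((Fintype.card ι : ℝ) * d)) * Set.indicator (bad y (4*η m)) (fun _ => (1:ℝ)) ω := by
          ring
    -- note sd = sqrt d
  have hT1 : |(1/(n:ℝ)) * ∑ k ∈ Finset.range n, gfun Λ x.1 (X k ϖ)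
      - (1/(n:ℝ)) * ∑ k ∈ Finset.range n, gfun Λ y (X k ϖ)| ≤ ε1 + K2 * Mn := by
    rw [← mul_sub, ← Finset.sum_sub_distrib, abs_mul, abs_of_nonneg (h1nn n)]
    calc (1/(n:ℝ)) * |∑ k ∈ Finset.range n, (gfun Λ x.1 (X k ϖ) - gfun Λ y (X k ϖ))|
        ≤ (1/(n:ℝ)) * ∑ k ∈ Finset.range n, |gfun Λ x.1 (X k ϖ) - gfun Λ y (X k ϖ)| :=
          mul_le_mul_of_nonneg_left (Finset.abs_sum_le_sum_abs _ _) (h1nn n)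
      _ ≤ (1/(n:ℝ)) * ∑ k ∈ Finset.range n, (ε1
            + K2 * Set.indicator (bad y (4*η m)) (fun _ => (1:ℝ)) (X k ϖ)) := by
          refine mul_le_mul_of_nonneg_left (Finset.sum_le_sum fun k _ => ?_) (h1nn n)
          exact hcomp _ (hω1 k)
      _ = (1/(n:ℝ)) * ((n:ℝ) * ε1) + K2 * Mn := by
          rw [Finset.sum_add_distrib, Finset.sum_const, Finset.card_range, nsmul_eq_mul,
            ← Finset.mul_sum, hMndef]
          ring
      _ ≤ ε1 + K2 * Mn := by
          have : (1/(n:ℝ)) * ((n:ℝ) * ε1) ≤ ε1 := by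
            calc (1/(n:ℝ)) * ((n:ℝ) * ε1) = ((1/(n:ℝ)) * (n:ℝ)) * ε1 := by ring
              _ ≤ 1 * ε1 := mul_le_mul_of_nonneg_right (hn1 n) hε1nn
              _ = ε1 := one_mul _
          linarith
  have hT3 : |∫ ω, gfun Λ x.1 ω ∂P - ∫ ω, gfun Λ y ω ∂P| ≤ ε1 + K2 * pB := by
    rw [← integral_sub (hPint x.1 x.2.1) (hPint y hy_sep.1)]
    have hintdiff : Integrable (fun ω => gfun Λ x.1 ω - gfun Λ y ω) P :=
      (hPint x.1 x.2.1).sub (hPint y hy_sep.1)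
    have hintB : Integrable (fun ω : Eu d => ε1
        + K2 * Set.indicator (bad y (4*η m)) (fun _ => (1:ℝ)) ω) P := by
      refine (integrable_const ε1).add ?_
      exact (((integrable_const (1:ℝ)).indicator (measurableSet_bad y (4*η m))).const_mul K2)
    calc |∫ ω, (gfun Λ x.1 ω - gfun Λ y ω) ∂P|
        ≤ ∫ ω, |gfun Λ x.1 ω - gfun Λ y ω| ∂P := by
          have := norm_integral_le_integral_norm (μ := P) (fun ω => gfun Λ x.1 ω - gfun Λ y ω)
          simpa [Real.norm_eq_abs] using this
      _ ≤ ∫ ω, (ε1 + K2 * Set.indicator (bad y (4*η m)) (fun _ => (1:ℝ)) ω) ∂P := by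
          refine integral_mono_ae hintdiff.abs hintB ?_
          filter_upwards [haeP] with ω hω
          exact hcomp ω hω
      _ = ε1 + K2 * pB := by
          rw [integral_add (integrable_const ε1)
            (((integrable_const (1:ℝ)).indicator (measurableSet_bad y (4*η m))).const_mul K2),
            integral_const, integral_const_mul, integral_indicator_const (1:ℝ)
              (measurableSet_bad y (4*η m)), probReal_univ,
            smul_eq_mul, smul_eq_mul, one_mul, mul_one]
          rfl
  have hMn_le : Mn ≤ pB + |Mn - pB| := by
    have := le_abs_self (Mn - pB)
    linarith
  have hpB_le : pB ≤ 1/((m:ℝ)+1) := hηP m y (hsep_half hy_sep)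
  have hη_le : η m ≤ 1/((m:ℝ)+1) := hη1 m
  -- combine
  have htri : |A n x| ≤ (ε1 + K2 * Mn) + ε/8 + (ε1 + K2 * pB) := by
    rw [hAdef]
    calc |(1/(n:ℝ)) * ∑ k ∈ Finset.range n, gfun Λ x.1 (X k ϖ) - ∫ ω, gfun Λ x.1 ω ∂P|
        ≤ |(1/(n:ℝ)) * ∑ k ∈ Finset.range n, gfun Λ x.1 (X k ϖ)
            - (1/(n:ℝ)) * ∑ k ∈ Finset.range n, gfun Λ y (X k ϖ)|
          + |(1/(n:ℝ)) * ∑ k ∈ Finset.range n, gfun Λ y (X k ϖ) - ∫ ω, gfun Λ x.1 ω ∂P| :=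
          abs_sub_le _ _ _
      _ ≤ |(1/(n:ℝ)) * ∑ k ∈ Finset.range n, gfun Λ x.1 (X k ϖ)
            - (1/(n:ℝ)) * ∑ k ∈ Finset.range n, gfun Λ y (X k ϖ)|
          + (|(1/(n:ℝ)) * ∑ k ∈ Finset.range n, gfun Λ y (X k ϖ) - ∫ ω, gfun Λ y ω ∂P|
            + |∫ ω, gfun Λ y ω ∂P - ∫ ω, gfun Λ x.1 ω ∂P|) := by
          refine add_le_add le_rfl (abs_sub_le _ _ _)
      _ ≤ (ε1 + K2 * Mn) + ε/8 + (ε1 + K2 * pB) := by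
          have h3' : |∫ ω, gfun Λ y ω ∂P - ∫ ω, gfun Λ x.1 ω ∂P| ≤ ε1 + K2 * pB := by
            rw [abs_sub_comm]; exact hT3
          linarith [hT1, hA1.le, h3']
  have hK2Mn : K2 * Mn ≤ K2 * pB + K2 * |Mn - pB| := by
    have := mul_le_mul_of_nonneg_left hMn_le hK20
    nlinarith
  have hK2pB : K2 * pB ≤ K2 * (1/((m:ℝ)+1)) := mul_le_mul_of_nonneg_left hpB_le hK20
  have hε1' : ε1 ≤ 2 * sd * (Fintype.card ι : ℝ) * (1/((m:ℝ)+1)) := by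
    rw [hε1def]
    have hcard : (0:ℝ) ≤ (Fintype.card ι : ℝ) := by positivity
    nlinarith [mul_le_mul_of_nonneg_left hη_le
      (by positivity : (0:ℝ) ≤ 2 * sd * (Fintype.card ι : ℝ))]
  have hcc : cC * (1/((m:ℝ)+1)) = 4 * sd * (Fintype.card ι : ℝ) * (1/((m:ℝ)+1))
      + 2 * K2 * (1/((m:ℝ)+1)) := by rw [hcCdef]; ring
  calc |A n x| ≤ (ε1 + K2 * Mn) + ε/8 + (ε1 + K2 * pB) := htri
    _ ≤ 2*ε1 + 2*(K2 * pB) + K2 * |Mn - pB| + ε/8 := by linarith [hK2Mn]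
    _ ≤ cC * (1/((m:ℝ)+1)) + (ε/8 + ε/8) := by
        rw [hcc]
        linarith [hε1', hK2pB, hA2.le]
end
end
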